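/- arXiv:1003.2588 — 9 statements merged into one kernel-verified Lean document; each statement's English description precedes it below -/
import Mathlib

section
/- Define Σ₀ : ℝ^{k+1} → ℝ² by Σ₀(x₀,…,x_k) = (x₀, Σ_{i=1}^k x_i). Let 0 ≤ s ≤ k−2 be an integer. Then every Σ₀-set τ ⊆ {0,1}^{k+1} is contained in some integer translate x + Ξ^k_s of the sandwich Ξ^k_s, where x ∈ ℤ^{k+1}. -/
/-- The `(k,s)`-sandwich `Ξ^k_s ⊆ ℤ × ℤ^k`. -/
def Sandwich (k : ℕ) (s : ℤ) : Set (ℤ × (Fin k → ℤ)) :=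
  {p | (∀ i, p.2 i = 0 ∨ p.2 i = 1) ∧
    ((p.1 = -1 ∧ (∑ i, p.2 i) < s) ∨
     (p.1 = 0 ∧ (∑ i, p.2 i) < (k : ℤ)) ∨
     (p.1 = 1 ∧ s < (∑ i, p.2 i)))}

/-- The 0-1 cube `{0,1}^{1+k} ⊆ ℤ × ℤ^k`. -/
def Cube (k : ℕ) : Set (ℤ × (Fin k → ℤ)) :=
  {p | (p.1 = 0 ∨ p.1 = 1) ∧ (∀ i, p.2 i = 0 ∨ p.2 i = 1)}

/-- `τ ⊆ {0,1}^{1+k}` is a `Σ₀`-set: it lies in a facet of the cube, and its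
image under `Σ₀ : p ↦ (p.1, Σᵢ p.2 i)` lies in a triangle
`{(0,a),(0,a+1),(1,a+1)}` or `{(0,a),(1,a),(1,a+1)}` for some `0 ≤ a ≤ k-1`. -/
def IsSigmaZeroSet (k : ℕ) (τ : Set (ℤ × (Fin k → ℤ))) : Prop :=
  τ ⊆ Cube k ∧
  ((∃ l : ℤ, (l = 0 ∨ l = 1) ∧ ∀ p ∈ τ, p.1 = l) ∨
   (∃ γ : Fin k, ∃ l : ℤ, (l = 0 ∨ l = 1) ∧ ∀ p ∈ τ, p.2 γ = l)) ∧
  (∃ a : ℕ, a + 1 ≤ k ∧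
    ((∀ p ∈ τ, (p.1, ∑ i, p.2 i) = ((0 : ℤ), (a : ℤ)) ∨
        (p.1, ∑ i, p.2 i) = ((0 : ℤ), (a : ℤ) + 1) ∨
        (p.1, ∑ i, p.2 i) = ((1 : ℤ), (a : ℤ) + 1)) ∨
     (∀ p ∈ τ, (p.1, ∑ i, p.2 i) = ((0 : ℤ), (a : ℤ)) ∨
        (p.1, ∑ i, p.2 i) = ((1 : ℤ), (a : ℤ)) ∨
        (p.1, ∑ i, p.2 i) = ((1 : ℤ), (a : ℤ) + 1))))

def aux_vec (k : ℕ) (γ : Fin k) (c : ℤ) : Fin k → ℤ := fun j => if j = γ then c else 0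

lemma aux_sum_vec (k : ℕ) (γ : Fin k) (c : ℤ) : ∑ i, aux_vec k γ c i = c := by
  simp [aux_vec]

lemma aux_sum_lt (k : ℕ) (f : Fin k → ℤ) (hf : ∀ i, f i = 0 ∨ f i = 1) (γ : Fin k)
    (hγ : f γ = 0) : ∑ i, f i < (k : ℤ) := by
  have h := Finset.sum_lt_sum (f := f) (g := fun _ => (1:ℤ))
    (fun i _ => show f i ≤ 1 by rcases hf i with h|h <;> omega)
    ⟨γ, Finset.mem_univ γ, show f γ < 1 by omega⟩
  simpa using h

lemma aux_coord (k : ℕ) (γ : Fin k) (c l : ℤ) (hcl : l - c = 0 ∨ l - c = 1)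
    (f : Fin k → ℤ) (hf : ∀ i, f i = 0 ∨ f i = 1) (hγ : f γ = l) :
    ∀ i, f i - aux_vec k γ c i = 0 ∨ f i - aux_vec k γ c i = 1 := by
  intro i
  rcases eq_or_ne i γ with rfl | h
  · simpa [aux_vec, hγ] using hcl
  · simpa [aux_vec, h] using hf i

lemma aux_cover (k : ℕ) (s : ℤ) (τ : Set (ℤ × (Fin k → ℤ))) (x₁ : ℤ) (v : Fin k → ℤ)
    (h : ∀ p ∈ τ, (∀ i, p.2 i - v i = 0 ∨ p.2 i - v i = 1) ∧
      ((p.1 - x₁ = -1 ∧ (∑ i, p.2 i) - (∑ i, v i) < s) ∨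
       (p.1 - x₁ = 0 ∧ (∑ i, p.2 i) - (∑ i, v i) < (k:ℤ)) ∨
       (p.1 - x₁ = 1 ∧ s < (∑ i, p.2 i) - (∑ i, v i)))) :
    τ ⊆ (fun q => ((x₁, v) : ℤ × (Fin k → ℤ)) + q) '' Sandwich k s := by
  set x : ℤ × (Fin k → ℤ) := (x₁, v)
  intro p hp
  obtain ⟨h2, h1⟩ := h p hp
  refine ⟨p - x, ⟨fun i => h2 i, ?_⟩, by show x + (p - x) = p; abel⟩
  have hS : ∑ i, (p - x).2 i = (∑ i, p.2 i) - (∑ i, x.2 i) := by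
    simp [Finset.sum_sub_distrib]
  show ((p-x).1 = -1 ∧ _ < s) ∨ ((p-x).1 = 0 ∧ _) ∨ ((p-x).1 = 1 ∧ _)
  rw [hS]
  exact h1



/-- Every `Σ₀`-set is covered by an integer translate of the sandwich `Ξ^k_s`,
whenever `0 ≤ s ≤ k - 2`. -/
theorem sigmaZeroSet_subset_translate_sandwich (k : ℕ) (s : ℕ) (hs : s + 2 ≤ k)
    (τ : Set (ℤ × (Fin k → ℤ))) (hτ : IsSigmaZeroSet k τ) :
    ∃ x : ℤ × (Fin k → ℤ), τ ⊆ (fun q => x + q) '' Sandwich k (s : ℤ) := by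
  obtain ⟨hcube, hfacet, a, hak, htri⟩ := hτ
  rcases htri with hA | hB
  · -- triangle {(0,a),(0,a+1),(1,a+1)}
    by_cases h1 : a + 1 = k
    · rcases hfacet with ⟨l, hl01, hl⟩ | ⟨γ, l, hl01, hl⟩
      · rcases hl01 with rfl | rfl
        · refine ⟨((-1:ℤ), 0), aux_cover k s τ (-1) 0 ?_⟩
          rintro ⟨p1, p2⟩ hp
          obtain ⟨hp01, hp2⟩ := hcube hp
          have ht := hA _ hp; simp only [Prod.mk.injEq] at ht
          have hf := hl _ hp
          refine ⟨fun i => by simpa using hp2 i, ?_⟩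
          simp only [Pi.zero_apply, Finset.sum_const_zero]
          set S := ∑ i, p2 i
          omega
        · refine ⟨((0:ℤ), 0), aux_cover k s τ 0 0 ?_⟩
          rintro ⟨p1, p2⟩ hp
          obtain ⟨hp01, hp2⟩ := hcube hp
          have ht := hA _ hp; simp only [Prod.mk.injEq] at ht
          have hf := hl _ hp
          refine ⟨fun i => by simpa using hp2 i, ?_⟩
          simp only [Pi.zero_apply, Finset.sum_const_zero]
          set S := ∑ i, p2 i
          omega
      · rcases hl01 with rfl | rfl
        · refine ⟨((0:ℤ), 0), aux_cover k s τ 0 0 ?_⟩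
          rintro ⟨p1, p2⟩ hp
          obtain ⟨hp01, hp2⟩ := hcube hp
          have ht := hA _ hp; simp only [Prod.mk.injEq] at ht
          have hlt := aux_sum_lt k p2 hp2 γ (hl _ hp)
          refine ⟨fun i => by simpa using hp2 i, ?_⟩
          simp only [Pi.zero_apply, Finset.sum_const_zero]
          set S := ∑ i, p2 i
          omega
        · refine ⟨((0:ℤ), aux_vec k γ 1), aux_cover k s τ 0 (aux_vec k γ 1) ?_⟩
          rintro ⟨p1, p2⟩ hp
          obtain ⟨hp01, hp2⟩ := hcube hp
          have ht := hA _ hp; simp only [Prod.mk.injEq] at ht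
          refine ⟨aux_coord k γ 1 1 (by norm_num) p2 hp2 (hl _ hp), ?_⟩
          simp only [aux_sum_vec]
          set S := ∑ i, p2 i
          omega
    · by_cases h2 : a + 1 = s
      · rcases hfacet with ⟨l, hl01, hl⟩ | ⟨γ, l, hl01, hl⟩
        · rcases hl01 with rfl | rfl
          · refine ⟨((0:ℤ), 0), aux_cover k s τ 0 0 ?_⟩
            rintro ⟨p1, p2⟩ hp
            obtain ⟨hp01, hp2⟩ := hcube hp
            have ht := hA _ hp; simp only [Prod.mk.injEq] at ht
            have hf := hl _ hp
            refine ⟨fun i => by simpa using hp2 i, ?_⟩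
            simp only [Pi.zero_apply, Finset.sum_const_zero]
            set S := ∑ i, p2 i
            omega
          · refine ⟨((1:ℤ), 0), aux_cover k s τ 1 0 ?_⟩
            rintro ⟨p1, p2⟩ hp
            obtain ⟨hp01, hp2⟩ := hcube hp
            have ht := hA _ hp; simp only [Prod.mk.injEq] at ht
            have hf := hl _ hp
            refine ⟨fun i => by simpa using hp2 i, ?_⟩
            simp only [Pi.zero_apply, Finset.sum_const_zero]
            set S := ∑ i, p2 i
            omega
        · rcases hl01 with rfl | rfl
          · refine ⟨((0:ℤ), aux_vec k γ (-1)), aux_cover k s τ 0 (aux_vec k γ (-1)) ?_⟩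
            rintro ⟨p1, p2⟩ hp
            obtain ⟨hp01, hp2⟩ := hcube hp
            have ht := hA _ hp; simp only [Prod.mk.injEq] at ht
            refine ⟨aux_coord k γ (-1) 0 (by norm_num) p2 hp2 (hl _ hp), ?_⟩
            simp only [aux_sum_vec]
            set S := ∑ i, p2 i
            omega
          · refine ⟨((1:ℤ), aux_vec k γ 1), aux_cover k s τ 1 (aux_vec k γ 1) ?_⟩
            rintro ⟨p1, p2⟩ hp
            obtain ⟨hp01, hp2⟩ := hcube hp
            have ht := hA _ hp; simp only [Prod.mk.injEq] at ht
            refine ⟨aux_coord k γ 1 1 (by norm_num) p2 hp2 (hl _ hp), ?_⟩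
            simp only [aux_sum_vec]
            set S := ∑ i, p2 i
            omega
      · by_cases h3 : a + 1 < s
        · refine ⟨((1:ℤ), 0), aux_cover k s τ 1 0 ?_⟩
          rintro ⟨p1, p2⟩ hp
          obtain ⟨hp01, hp2⟩ := hcube hp
          have ht := hA _ hp; simp only [Prod.mk.injEq] at ht
          refine ⟨fun i => by simpa using hp2 i, ?_⟩
          simp only [Pi.zero_apply, Finset.sum_const_zero]
          set S := ∑ i, p2 i
          omega
        · refine ⟨((0:ℤ), 0), aux_cover k s τ 0 0 ?_⟩
          rintro ⟨p1, p2⟩ hp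
          obtain ⟨hp01, hp2⟩ := hcube hp
          have ht := hA _ hp; simp only [Prod.mk.injEq] at ht
          refine ⟨fun i => by simpa using hp2 i, ?_⟩
          simp only [Pi.zero_apply, Finset.sum_const_zero]
          set S := ∑ i, p2 i
          omega
  · -- triangle {(0,a),(1,a),(1,a+1)}
    by_cases hb : a = s
    · rcases hfacet with ⟨l, hl01, hl⟩ | ⟨γ, l, hl01, hl⟩
      · rcases hl01 with rfl | rfl
        · refine ⟨((0:ℤ), 0), aux_cover k s τ 0 0 ?_⟩
          rintro ⟨p1, p2⟩ hp
          obtain ⟨hp01, hp2⟩ := hcube hp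
          have ht := hB _ hp; simp only [Prod.mk.injEq] at ht
          have hf := hl _ hp
          refine ⟨fun i => by simpa using hp2 i, ?_⟩
          simp only [Pi.zero_apply, Finset.sum_const_zero]
          set S := ∑ i, p2 i
          omega
        · refine ⟨((1:ℤ), 0), aux_cover k s τ 1 0 ?_⟩
          rintro ⟨p1, p2⟩ hp
          obtain ⟨hp01, hp2⟩ := hcube hp
          have ht := hB _ hp; simp only [Prod.mk.injEq] at ht
          have hf := hl _ hp
          refine ⟨fun i => by simpa using hp2 i, ?_⟩
          simp only [Pi.zero_apply, Finset.sum_const_zero]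
          set S := ∑ i, p2 i
          omega
      · rcases hl01 with rfl | rfl
        · refine ⟨((0:ℤ), aux_vec k γ (-1)), aux_cover k s τ 0 (aux_vec k γ (-1)) ?_⟩
          rintro ⟨p1, p2⟩ hp
          obtain ⟨hp01, hp2⟩ := hcube hp
          have ht := hB _ hp; simp only [Prod.mk.injEq] at ht
          refine ⟨aux_coord k γ (-1) 0 (by norm_num) p2 hp2 (hl _ hp), ?_⟩
          simp only [aux_sum_vec]
          set S := ∑ i, p2 i
          omega
        · refine ⟨((1:ℤ), aux_vec k γ 1), aux_cover k s τ 1 (aux_vec k γ 1) ?_⟩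
          rintro ⟨p1, p2⟩ hp
          obtain ⟨hp01, hp2⟩ := hcube hp
          have ht := hB _ hp; simp only [Prod.mk.injEq] at ht
          refine ⟨aux_coord k γ 1 1 (by norm_num) p2 hp2 (hl _ hp), ?_⟩
          simp only [aux_sum_vec]
          set S := ∑ i, p2 i
          omega
    · by_cases hb2 : a < s
      · refine ⟨((1:ℤ), 0), aux_cover k s τ 1 0 ?_⟩
        rintro ⟨p1, p2⟩ hp
        obtain ⟨hp01, hp2⟩ := hcube hp
        have ht := hB _ hp; simp only [Prod.mk.injEq] at ht
        refine ⟨fun i => by simpa using hp2 i, ?_⟩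
        simp only [Pi.zero_apply, Finset.sum_const_zero]
        set S := ∑ i, p2 i
        omega
      · refine ⟨((0:ℤ), 0), aux_cover k s τ 0 0 ?_⟩
        rintro ⟨p1, p2⟩ hp
        obtain ⟨hp01, hp2⟩ := hcube hp
        have ht := hB _ hp; simp only [Prod.mk.injEq] at ht
        refine ⟨fun i => by simpa using hp2 i, ?_⟩
        simp only [Pi.zero_apply, Finset.sum_const_zero]
        set S := ∑ i, p2 i
        omega
end

section
/- Every subset of ℝ³ with at most 5 elements is T-shaped. -/
open Matrix

/-- The set `T_n ⊆ ℝⁿ`, with `T_0 = ∅` and `T_{n+1} = (ℝⁿ × {0}) ∪ (T_n × ℝ₊)`. -/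
def Tset : (n : ℕ) → Set (Fin n → ℝ)
  | 0 => ∅
  | n + 1 =>
      {x | x (Fin.last n) = 0 ∨
        ((fun i : Fin n => x i.castSucc) ∈ Tset n ∧ 0 ≤ x (Fin.last n))}

/-- `C ⊆ ℝ^{n+1}` is T-shaped if some invertible affine transformation maps it
into `ℝ × T_n`. -/
def IsTShaped (n : ℕ) (C : Set (Fin (n + 1) → ℝ)) : Prop :=
  ∃ f : (Fin (n + 1) → ℝ) ≃ᵃ[ℝ] (Fin (n + 1) → ℝ),
    ∀ x ∈ C, (fun i : Fin n => f x i.succ) ∈ Tset n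

lemma mem_Tset_two {y : Fin 2 → ℝ} : y ∈ Tset 2 ↔ y 1 = 0 ∨ (y 0 = 0 ∧ 0 ≤ y 1) := by
  simp [Tset, Fin.last]


lemma linear_eq_dot (ℓ : (Fin 3 → ℝ) →ₗ[ℝ] ℝ) (x : Fin 3 → ℝ) :
    ℓ x = (fun i => ℓ fun j => if i = j then 1 else 0) ⬝ᵥ x := by
  rw [LinearMap.pi_apply_eq_sum_univ]
  simp [dotProduct, mul_comm]


lemma exists_dot_indep {w : Fin 3 → ℝ} (hw : w ≠ 0) (d : Fin 3 → ℝ) :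
    ∃ v, d ⬝ᵥ v = 0 ∧ LinearIndependent ℝ ![v, w] := by
  let ld : (Fin 3 → ℝ) →ₗ[ℝ] ℝ :=
    { toFun := fun x => d ⬝ᵥ x
      map_add' := fun x y => dotProduct_add _ _ _
      map_smul' := fun a x => by simp }
  have hK2 : 2 ≤ Module.finrank ℝ (LinearMap.ker ld) := by
    have h1 := LinearMap.finrank_range_add_finrank_ker ld
    have h2 : Module.finrank ℝ (LinearMap.range ld) ≤ 1 := by
      simpa using (LinearMap.range ld).finrank_le
    have h3 : Module.finrank ℝ (Fin 3 → ℝ) = 3 := by simp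
    omega
  have hnle : ¬ (LinearMap.ker ld ≤ Submodule.span ℝ {w}) := by
    intro hle
    have := Submodule.finrank_mono hle
    rw [finrank_span_singleton hw] at this
    omega
  obtain ⟨v, hvK, hvw⟩ := SetLike.not_le_iff_exists.1 hnle
  refine ⟨v, hvK, linearIndependent_fin2.2 ⟨by simpa using hw, fun a h => hvw ?_⟩⟩
  rw [show v = a • w by simpa using h.symm]
  exact Submodule.smul_mem _ _ (Submodule.mem_span_singleton_self w)

lemma isTShaped_of_rows (C : Set (Fin 3 → ℝ)) (v w : Fin 3 → ℝ) (b c : ℝ)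
    (hvw : LinearIndependent ℝ ![v, w])
    (hcond : ∀ x ∈ C, w ⬝ᵥ x = c ∨ (v ⬝ᵥ x = b ∧ c ≤ w ⬝ᵥ x)) : IsTShaped 2 C := by
  set u := crossProduct v w with hu
  have hu0 : u ≠ 0 := crossProduct_ne_zero_iff_linearIndependent.2 hvw
  set A : Matrix (Fin 3) (Fin 3) ℝ := Matrix.of ![u, v, w] with hA
  have hdet : IsUnit A.det := by
    have h1 : A.det = u ⬝ᵥ (crossProduct v w) := (triple_product_eq_det u v w).symm
    rw [isUnit_iff_ne_zero, h1, ← hu, Ne, dotProduct_self_eq_zero]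
    exact hu0
  haveI := A.invertibleOfIsUnitDet hdet
  let M := A.toLinearEquiv' (A.invertibleOfIsUnitDet hdet)
  refine ⟨(M.toAffineEquiv).trans (AffineEquiv.constVAdd ℝ (Fin 3 → ℝ) ![0, -b, -c]), ?_⟩
  intro x hx
  have hM : ∀ i, M x i = (A *ᵥ x) i := by
    intro i; rfl
  have key : ∀ i : Fin 3,
      ((M.toAffineEquiv).trans (AffineEquiv.constVAdd ℝ (Fin 3 → ℝ) ![0, -b, -c])) x i
        = ![(0:ℝ), -b, -c] i + (A *ᵥ x) i := by
    intro i
    simp [AffineEquiv.trans_apply, AffineEquiv.constVAdd_apply, hM]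
  rw [mem_Tset_two]
  have h1 : (A *ᵥ x) 1 = v ⬝ᵥ x := by simp [hA, Matrix.mulVec]
  have h2 : (A *ᵥ x) 2 = w ⬝ᵥ x := by simp [hA, Matrix.mulVec]
  have e2 : ((1 : Fin 2).succ : Fin 3) = 2 := rfl
  have e1 : (((0 : Fin 2)).succ : Fin 3) = 1 := rfl
  rcases hcond x hx with h | ⟨hv, hc⟩
  · left
    show ((M.toAffineEquiv).trans (AffineEquiv.constVAdd ℝ (Fin 3 → ℝ) ![0, -b, -c])) x
        ((1 : Fin 2).succ) = 0
    rw [e2, key 2, h2]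
    simp [h]
  · right
    constructor
    · show ((M.toAffineEquiv).trans (AffineEquiv.constVAdd ℝ (Fin 3 → ℝ) ![0, -b, -c])) x
        ((0 : Fin 2).succ) = 0
      rw [e1, key 1, h1]
      simp [hv]
    · show (0:ℝ) ≤ ((M.toAffineEquiv).trans (AffineEquiv.constVAdd ℝ (Fin 3 → ℝ) ![0, -b, -c])) x
        ((1 : Fin 2).succ)
      rw [e2, key 2, h2, show (![(0:ℝ), -b, -c]) 2 = -c from rfl]
      linarith

/-- Every subset of `ℝ³` with at most 5 elements is T-shaped. -/
theorem tShaped_of_card_le_five (C : Set (Fin 3 → ℝ)) (hC : C.encard ≤ 5) :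
    IsTShaped 2 C := by
  classical
  by_cases htop : affineSpan ℝ C = ⊤
  · -- spanning case
    obtain ⟨t, hts, hspan, hind⟩ := exists_affineIndependent ℝ (Fin 3 → ℝ) C
    rw [htop] at hspan
    have hfin : C.Finite := Set.finite_of_encard_le_coe (by exact_mod_cast hC)
    have htfin : t.Finite := hfin.subset hts
    haveI : Fintype ↥t := htfin.fintype
    have htne : t.Nonempty := by
      rcases t.eq_empty_or_nonempty with rfl | h
      · rw [AffineSubspace.span_empty] at hspan
        exact absurd hspan (AffineSubspace.bot_ne_top ℝ (Fin 3 → ℝ) (Fin 3 → ℝ))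
      · exact h
    haveI : Nonempty ↥t := htne.to_subtype
    let B : AffineBasis ↥t ℝ (Fin 3 → ℝ) := ⟨Subtype.val, hind, by rwa [Subtype.range_coe]⟩
    have hB : ∀ j : ↥t, B j = (j : Fin 3 → ℝ) := fun j => rfl
    have hcard : Fintype.card ↥t = 4 := by
      have h := B.card_eq_finrank_add_one
      simpa using h
    obtain ⟨e, he⟩ : ∃ e, ∀ x ∈ C, x ∈ t ∨ x = e := by
      have htenc : t.encard = 4 := by
        rw [Set.encard_eq_coe_toFinset_card, Set.toFinset_card, hcard]
        rfl
      have h4 := Set.encard_diff_add_encard_of_subset hts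
      rw [htenc] at h4
      have hd1 : (C \ t).encard ≤ 1 := by
        rw [← h4, show (5 : ℕ∞) = 1 + 4 by rfl] at hC
        exact (ENat.add_le_add_iff_right (by simp)).1 hC
      rcases Set.encard_le_one_iff_eq.1 hd1 with h | ⟨e, h⟩
      · refine ⟨htne.choose, fun x hx => Or.inl ?_⟩
        by_contra hxt
        exact absurd (Set.eq_empty_iff_forall_notMem.1 h x) (by simp [hx, hxt])
      · refine ⟨e, fun x hx => ?_⟩
        by_cases hxt : x ∈ t
        · exact Or.inl hxt
        · right
          have : x ∈ C \ t := ⟨hx, hxt⟩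
          rw [h] at this
          simpa using this
    obtain ⟨i, hi⟩ : ∃ i : ↥t, 0 < B.coord i e := by
      by_contra h
      push_neg at h
      have hsum := B.sum_coord_apply_eq_one e
      have hle : (∑ i, B.coord i e) ≤ 0 := Finset.sum_nonpos (fun i _ => h i)
      linarith
    set ℓ := (B.coord i).linear with hℓ
    set w : Fin 3 → ℝ := fun k => ℓ fun j => if k = j then 1 else 0 with hwdef
    set c : ℝ := -(B.coord i 0) with hcdef
    have hcoord : ∀ x, B.coord i x = w ⬝ᵥ x - c := by
      intro x
      have h1 : B.coord i x = ℓ x + B.coord i 0 := by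
        conv_lhs => rw [AffineMap.decomp (B.coord i)]
        rfl
      rw [h1, linear_eq_dot ℓ x, hcdef]
      ring_nf
      exact add_comm _ _
    have hw0 : w ≠ 0 := by
      obtain ⟨j, hj⟩ := Fintype.exists_ne_of_one_lt_card (by omega) i
      intro h0
      have h1 : B.coord i (B i) = 1 := B.coord_apply_eq i
      have h2 : B.coord i (B j) = 0 := B.coord_apply_ne (Ne.symm hj)
      rw [hcoord, h0, zero_dotProduct] at h1 h2
      linarith
    set p : Fin 3 → ℝ := (i : Fin 3 → ℝ) with hpdef
    obtain ⟨v, hvd, hvw⟩ := exists_dot_indep hw0 (e - p)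
    apply isTShaped_of_rows C v w (v ⬝ᵥ p) c hvw
    intro x hx
    rcases he x hx with hxt | rfl
    · by_cases hxi : (⟨x, hxt⟩ : ↥t) = i
      · right
        have hpx : p = x := by rw [hpdef, ← hxi]
        refine ⟨by rw [hpx], ?_⟩
        have h1 : B.coord i x = 1 := by
          rw [show x = B i from by rw [hB, ← hxi]]
          exact B.coord_apply_eq i
        rw [hcoord x] at h1
        linarith
      · left
        have h0 : B.coord i x = 0 := by
          rw [show x = B ⟨x, hxt⟩ from rfl]
          exact B.coord_apply_ne (fun h => hxi h.symm)
        rw [hcoord x] at h0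
        linarith
    · right
      constructor
      · have h1 := hvd
        rw [sub_dotProduct] at h1
        rw [dotProduct_comm v x, dotProduct_comm v p]
        linarith
      · have h2 := hcoord x
        linarith [hi, h2]
  · -- degenerate case
    rcases C.eq_empty_or_nonempty with rfl | ⟨p, hp⟩
    · obtain ⟨v, _, hvw⟩ := exists_dot_indep (w := ![0, 1, 0])
        (by intro h; have := congrFun h 1; simp at this) 0
      exact isTShaped_of_rows _ v ![0, 1, 0] 0 0 hvw
        (fun x hx => absurd hx (Set.notMem_empty x))
    · have hne : ((affineSpan ℝ C : AffineSubspace ℝ (Fin 3 → ℝ)) :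
          Set (Fin 3 → ℝ)).Nonempty := ⟨p, subset_affineSpan ℝ C hp⟩
      have hdir : (affineSpan ℝ C).direction < ⊤ := by
        rcases lt_or_eq_of_le (le_top : (affineSpan ℝ C).direction ≤ ⊤) with h | h
        · exact h
        · exact absurd ((AffineSubspace.direction_eq_top_iff_of_nonempty hne).1 h) htop
      obtain ⟨φ, hφ0, hker⟩ := Submodule.exists_le_ker_of_lt_top _ hdir
      set w : Fin 3 → ℝ := fun k => φ fun j => if k = j then 1 else 0 with hwdef
      have hφ : ∀ x, φ x = w ⬝ᵥ x := fun x => linear_eq_dot φ x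
      have hw : w ≠ 0 := by
        intro h0
        apply hφ0
        refine LinearMap.ext fun x => ?_
        rw [hφ x, h0, zero_dotProduct, LinearMap.zero_apply]
      obtain ⟨v, _, hvw⟩ := exists_dot_indep hw 0
      refine isTShaped_of_rows _ v w 0 (w ⬝ᵥ p) hvw (fun x hx => Or.inl ?_)
      have hmem : x - p ∈ (affineSpan ℝ C).direction := by
        have h := AffineSubspace.vsub_mem_direction
          (subset_affineSpan ℝ C hx) (subset_affineSpan ℝ C hp)
        simpa using h
      have h0 : φ (x - p) = 0 := hker hmem
      rw [hφ, dotProduct_sub] at h0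
      linarith
end

section
/- There exists a 6-element subset of ℝ³ that is not T-shaped; hence t(ℝ³) = 6. -/
open Matrix Module Submodule

lemma mem_Tset2 (y : Fin 3 → ℝ) :
    (fun i : Fin 2 => y i.succ) ∈ Tset 2 ↔ (y 2 = 0 ∨ (y 1 = 0 ∧ 0 ≤ y 2)) := by
  show (_ = 0 ∨ (_ ∈ Tset 1 ∧ _)) ↔ _
  simp only [Tset, Set.mem_setOf_eq, Set.mem_empty_iff_false, false_and, or_false]
  rfl



def dotLM (a : Fin 3 → ℝ) : (Fin 3 → ℝ) →ₗ[ℝ] ℝ where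
  toFun x := a ⬝ᵥ x
  map_add' x y := by simp [dotProduct, mul_add, Finset.sum_add_distrib]
  map_smul' t x := by simp [dotProduct, Finset.mul_sum]; ring_nf; simp [mul_comm, mul_assoc, mul_left_comm]

@[simp] lemma dotLM_apply (a x : Fin 3 → ℝ) : dotLM a x = a ⬝ᵥ x := rfl

lemma avoid2 (a u : Fin 3 → ℝ) (hu : u ≠ 0) :
    ∃ b : Fin 3 → ℝ, b ⬝ᵥ u = 0 ∧ b ∉ span ℝ ({a} : Set (Fin 3 → ℝ)) := by
  set φ : (Fin 3 → ℝ) →ₗ[ℝ] ℝ := dotLM u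
  have hφsurj : LinearMap.range φ = ⊤ := by
    rw [LinearMap.range_eq_top]
    intro t
    refine ⟨(t / (u ⬝ᵥ u)) • u, ?_⟩
    have h0 : u ⬝ᵥ u ≠ 0 := fun h => hu (dotProduct_self_eq_zero.1 h)
    show u ⬝ᵥ ((t / (u ⬝ᵥ u)) • u) = t
    rw [dotProduct_smul, smul_eq_mul]
    exact div_mul_cancel₀ t h0
  have hker : Module.finrank ℝ (LinearMap.ker φ) = 2 := by
    have h1 := LinearMap.finrank_range_add_finrank_ker φ
    rw [hφsurj] at h1
    simp [Module.finrank_fintype_fun_eq_card] at h1 ⊢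
    omega
  have hnle : ¬ (LinearMap.ker φ ≤ span ℝ ({a} : Set (Fin 3 → ℝ))) := by
    intro hle
    have h2 : Module.finrank ℝ (span ℝ ({a} : Set (Fin 3 → ℝ))) ≤ 1 := by
      classical
      refine (finrank_span_le_card _).trans ?_
      simp
    have := Submodule.finrank_mono hle
    omega
  rw [SetLike.le_def] at hnle
  push_neg at hnle
  obtain ⟨b, hb1, hb2⟩ := hnle
  have : u ⬝ᵥ b = 0 := hb1
  exact ⟨b, by rwa [dotProduct_comm], hb2⟩

lemma vanish (S : Set (Fin 3 → ℝ)) (hfin : S.Finite) (hcard : S.ncard ≤ 3) :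
    ∃ (a : Fin 3 → ℝ) (c : ℝ), a ≠ 0 ∧ ∀ p ∈ S, a ⬝ᵥ p + c = 0 := by
  classical
  rcases S.eq_empty_or_nonempty with rfl | ⟨p₀, hp₀⟩
  · exact ⟨Pi.single 0 1, 0, fun h => by simpa using congrFun h 0, by simp⟩
  haveI := hfin.fintype
  set Φ : ((Fin 3 → ℝ) × ℝ) →ₗ[ℝ] (S → ℝ) :=
    { toFun := fun z => fun p => z.1 ⬝ᵥ (p : Fin 3 → ℝ) + z.2
      map_add' := by intro z w; funext p; simp [add_dotProduct]; ring
      map_smul' := by intro t z; funext p; simp [smul_dotProduct]; ring }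
  have hni : ¬ Function.Injective Φ := by
    intro hinj
    have h1 := LinearMap.finrank_le_finrank_of_injective hinj
    have h2 : finrank ℝ ((Fin 3 → ℝ) × ℝ) = 4 := by
      simp [Module.finrank_prod, Module.finrank_fintype_fun_eq_card]
    have h3 : finrank ℝ (S → ℝ) = S.ncard := by
      rw [Module.finrank_fintype_fun_eq_card, ← Nat.card_eq_fintype_card,
        Nat.card_coe_set_eq]
    omega
  rw [← LinearMap.ker_eq_bot] at hni
  obtain ⟨z, hz, hzne⟩ := Submodule.exists_mem_ne_zero_of_ne_bot hni
  rw [LinearMap.mem_ker] at hz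
  have hzv : ∀ p ∈ S, z.1 ⬝ᵥ p + z.2 = 0 := by
    intro p hp
    have := congrFun hz ⟨p, hp⟩
    simpa [Φ] using this
  refine ⟨z.1, z.2, ?_, hzv⟩
  intro h0
  apply hzne
  have hc : z.2 = 0 := by have := hzv p₀ hp₀; simpa [h0] using this
  exact Prod.ext h0 hc

lemma dep5 (P : Fin 5 → (Fin 3 → ℝ)) :
    ∃ lam : Fin 5 → ℝ, lam ≠ 0 ∧ (∑ i, lam i) = 0 ∧ (∑ i, lam i • P i) = 0 := by
  classical
  set Ψ : (Fin 5 → ℝ) →ₗ[ℝ] (ℝ × (Fin 3 → ℝ)) :=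
    { toFun := fun z => (∑ i, z i, ∑ i, z i • P i)
      map_add' := by
        intro z w
        simp [Prod.ext_iff, Finset.sum_add_distrib, add_smul]
      map_smul' := by
        intro t z
        refine Prod.ext ?_ ?_
        · simp [Finset.mul_sum]
        · show (∑ i, (t • z) i • P i) = t • ∑ i, z i • P i
          rw [Finset.smul_sum]
          refine Finset.sum_congr rfl fun i _ => ?_
          simp [smul_smul] }
  have hni : ¬ Function.Injective Ψ := by
    intro hinj
    have h1 := LinearMap.finrank_le_finrank_of_injective hinj
    have h2 : finrank ℝ (Fin 5 → ℝ) = 5 := by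
      simp [Module.finrank_fintype_fun_eq_card]
    have h3 : finrank ℝ (ℝ × (Fin 3 → ℝ)) = 4 := by
      simp [Module.finrank_prod, Module.finrank_fintype_fun_eq_card]
    omega
  rw [← LinearMap.ker_eq_bot] at hni
  obtain ⟨z, hz, hzne⟩ := Submodule.exists_mem_ne_zero_of_ne_bot hni
  rw [LinearMap.mem_ker] at hz
  have h1 : (∑ i, z i) = 0 := congrArg Prod.fst hz
  have h2 : (∑ i, z i • P i) = 0 := congrArg Prod.snd hz
  exact ⟨z, hzne, h1, h2⟩

lemma build (C : Set (Fin 3 → ℝ)) (a b : Fin 3 → ℝ) (c d : ℝ)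
    (ha : a ≠ 0) (hb : b ∉ span ℝ ({a} : Set (Fin 3 → ℝ)))
    (hcond : ∀ p ∈ C, a ⬝ᵥ p + c = 0 ∨ (b ⬝ᵥ p + d = 0 ∧ 0 ≤ a ⬝ᵥ p + c)) :
    IsTShaped 2 C := by
  classical
  -- find a coordinate vector outside span {b, a}
  obtain ⟨i, hi⟩ : ∃ i : Fin 3, Pi.single i (1:ℝ) ∉ span ℝ ({b, a} : Set (Fin 3 → ℝ)) := by
    by_contra hcon
    push_neg at hcon
    have htop : (⊤ : Submodule ℝ (Fin 3 → ℝ)) ≤ span ℝ ({b, a} : Set (Fin 3 → ℝ)) := by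
      rw [← (Pi.basisFun ℝ (Fin 3)).span_eq, Submodule.span_le]
      rintro x ⟨j, rfl⟩
      rw [Pi.basisFun_apply]
      exact hcon j
    have h1 : finrank ℝ (span ℝ ({b, a} : Set (Fin 3 → ℝ))) ≤ 2 := by
      refine (finrank_span_le_card _).trans ?_
      rw [Set.toFinset_card, ← Nat.card_eq_fintype_card, Nat.card_coe_set_eq]
      exact (Set.ncard_insert_le _ _).trans (by simp)
    have h2 : (3:ℕ) ≤ finrank ℝ (span ℝ ({b, a} : Set (Fin 3 → ℝ))) := by
      have := Submodule.finrank_mono htop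
      simpa [finrank_top, Module.finrank_fintype_fun_eq_card] using this
    omega
  have hli : LinearIndependent ℝ ![Pi.single i 1, b, a] := by
    rw [show (![Pi.single i 1, b, a]) = Fin.cons (Pi.single i (1:ℝ)) ![b, a] from rfl,
      linearIndependent_fin_cons]
    constructor
    · rw [linearIndependent_fin2]
      refine ⟨by simpa using ha, fun t ht => hb ?_⟩
      exact Submodule.mem_span_singleton.2 ⟨t, by simpa using ht⟩
    · intro hmem
      apply hi
      have hr : Set.range ![b, a] = {b, a} := by
        simp [Matrix.range_cons, Matrix.range_empty, Set.pair_comm]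
      rwa [hr] at hmem
  set M : Matrix (Fin 3) (Fin 3) ℝ := Matrix.of ![Pi.single i 1, b, a] with hM
  have hU : IsUnit M := by
    rw [← Matrix.linearIndependent_rows_iff_isUnit]
    exact hli
  haveI := hU.invertible
  set L : (Fin 3 → ℝ) ≃ₗ[ℝ] (Fin 3 → ℝ) := M.toLinearEquiv' this
  refine ⟨L.toAffineEquiv.trans (AffineEquiv.constVAdd ℝ (Fin 3 → ℝ) ![0, d, c]), ?_⟩
  intro x hx
  have hLx : ∀ y : Fin 3 → ℝ,
      (L.toAffineEquiv.trans (AffineEquiv.constVAdd ℝ (Fin 3 → ℝ) ![0, d, c])) y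
        = ![0, d, c] + M.mulVec y := by
    intro y
    show ![0, d, c] +ᵥ (L y) = _
    rw [vadd_eq_add]
    congr 1
  rw [mem_Tset2]
  rw [hLx x]
  have e1 : (![0, d, c] + M.mulVec x) 1 = b ⬝ᵥ x + d := by
    simp [hM, Matrix.mulVec, add_comm]
  have e2 : (![0, d, c] + M.mulVec x) 2 = a ⬝ᵥ x + c := by
    simp [hM, Matrix.mulVec, add_comm]
  rw [e1, e2]
  exact hcond x hx

lemma part2 (C : Set (Fin 3 → ℝ)) (hC : C.encard < 6) : IsTShaped 2 C := by
  classical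
  have hfin : C.Finite := by
    rw [← Set.encard_lt_top_iff]
    exact hC.trans_le le_top
  have hcard : C.ncard ≤ 5 := by
    have h1 : C.encard = (C.ncard : ℕ∞) := by
      rw [hfin.encard_eq_coe_toFinset_card, Set.ncard_eq_toFinset_card _ hfin]
    rw [h1] at hC
    exact_mod_cast Order.le_of_lt_add_one (by exact_mod_cast hC)
  by_cases hcop : ∃ (a : Fin 3 → ℝ) (c : ℝ), a ≠ 0 ∧ ∀ p ∈ C, a ⬝ᵥ p + c = 0
  · obtain ⟨a, c, ha, hv⟩ := hcop
    obtain ⟨b, -, hbs⟩ := avoid2 a (Pi.single 0 1)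
      (fun h => by simpa using congrFun h 0)
    exact build C a b c 0 ha hbs (fun p hp => Or.inl (hv p hp))
  · by_cases h5 : C.ncard = 5
    · -- five points, affine dependence argument
      have hcard5 : hfin.toFinset.card = 5 := by
        rw [← Set.ncard_eq_toFinset_card _ hfin]; exact h5
      set e := hfin.toFinset.equivFinOfCardEq hcard5 with he
      set P : Fin 5 → (Fin 3 → ℝ) := fun i => ((e.symm i : hfin.toFinset) : Fin 3 → ℝ)
        with hP
      have hPmem : ∀ i, P i ∈ C := by
        intro i
        have := (e.symm i).2
        rwa [Set.Finite.mem_toFinset] at this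
      have hPinj : Function.Injective P := by
        intro i j hij
        have : (e.symm i : hfin.toFinset) = e.symm j := Subtype.ext hij
        simpa using congrArg e this
      have hPsurj : ∀ p ∈ C, ∃ i, P i = p := by
        intro p hp
        exact ⟨e ⟨p, (Set.Finite.mem_toFinset hfin).2 hp⟩, by simp [hP]⟩
      obtain ⟨lam, hlne, hsum0, hvec0⟩ := dep5 P
      have hexu : ∃ u, 0 < lam u := by
        by_contra hcon
        push_neg at hcon
        have : lam = 0 := by
          funext i
          have := (Finset.sum_eq_zero_iff_of_nonpos (fun i _ => hcon i)).1 hsum0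
          exact this i (Finset.mem_univ i)
        exact hlne this
      have hexv : ∃ v, lam v < 0 := by
        by_contra hcon
        push_neg at hcon
        have : lam = 0 := by
          funext i
          have := (Finset.sum_eq_zero_iff_of_nonneg (fun i _ => hcon i)).1 hsum0
          exact this i (Finset.mem_univ i)
        exact hlne this
      obtain ⟨u, hu⟩ := hexu
      obtain ⟨v, hv⟩ := hexv
      have huv : u ≠ v := fun h => by rw [h] at hu; linarith
      have hPuv : P u ≠ P v := fun h => huv (hPinj h)
      set A : Set (Fin 3 → ℝ) := C \ {P u, P v} with hAdef
      have hAcard : A.ncard ≤ 3 := by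
        have hsub : ({P u, P v} : Set (Fin 3 → ℝ)) ⊆ C := by
          rintro x (rfl | rfl)
          · exact hPmem u
          · exact hPmem v
        have hpair : ({P u, P v} : Set (Fin 3 → ℝ)).ncard = 2 := Set.ncard_pair hPuv
        rw [hAdef, Set.ncard_diff hsub (Set.toFinite _), hpair, h5]
      obtain ⟨a, c, ha, hvan⟩ := vanish A (hfin.diff) hAcard
      -- the dependence forces same sign at P u and P v
      have hkey : lam u * (a ⬝ᵥ P u + c) + lam v * (a ⬝ᵥ P v + c) = 0 := by
        have h1 : (∑ i, lam i * (a ⬝ᵥ P i + c)) = 0 := by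
          have h2 : dotLM a (∑ i, lam i • P i) = 0 := by rw [hvec0]; simp
          rw [map_sum] at h2
          simp only [dotLM_apply, dotProduct_smul, smul_eq_mul] at h2
          have h3 : (∑ i, lam i * c) = 0 := by
            rw [← Finset.sum_mul, hsum0, zero_mul]
          calc (∑ i, lam i * (a ⬝ᵥ P i + c))
              = (∑ i, lam i * (a ⬝ᵥ P i)) + (∑ i, lam i * c) := by
                rw [← Finset.sum_add_distrib]; congr 1; funext i; ring
            _ = 0 := by rw [h2, h3, add_zero]
        have h4 : ∀ i ∈ (Finset.univ : Finset (Fin 5)), i ∉ ({u, v} : Finset (Fin 5)) →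
            lam i * (a ⬝ᵥ P i + c) = 0 := by
          intro i _ hi
          simp only [Finset.mem_insert, Finset.mem_singleton] at hi
          push_neg at hi
          have hmem : P i ∈ A := by
            refine ⟨hPmem i, ?_⟩
            simp only [Set.mem_insert_iff, Set.mem_singleton_iff]
            push_neg
            exact ⟨fun h => hi.1 (hPinj h), fun h => hi.2 (hPinj h)⟩
          rw [hvan (P i) hmem, mul_zero]
        have h5' := Finset.sum_subset (Finset.subset_univ ({u, v} : Finset (Fin 5)))
          (fun x hx hx2 => h4 x hx hx2)
        rw [Finset.sum_pair huv] at h5'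
        rw [h5', h1]
      -- get both values ≥ 0 after a possible sign flip
      obtain ⟨a, c, ha, hvan, hsu, hsv⟩ :
          ∃ (a : Fin 3 → ℝ) (c : ℝ), a ≠ 0 ∧ (∀ p ∈ A, a ⬝ᵥ p + c = 0) ∧
            0 ≤ a ⬝ᵥ P u + c ∧ 0 ≤ a ⬝ᵥ P v + c := by
        rcases le_total 0 (a ⬝ᵥ P u + c) with h | h
        · have : 0 ≤ a ⬝ᵥ P v + c := by nlinarith
          exact ⟨a, c, ha, hvan, h, this⟩
        · have h2 : a ⬝ᵥ P v + c ≤ 0 := by nlinarith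
          refine ⟨-a, -c, neg_ne_zero.2 ha, fun p hp => ?_, ?_, ?_⟩
          · rw [neg_dotProduct]; have := hvan p hp; linarith
          · rw [neg_dotProduct]; linarith
          · rw [neg_dotProduct]; linarith
      obtain ⟨b, hb0, hbs⟩ := avoid2 a (P u - P v) (sub_ne_zero.2 hPuv)
      have hbeq : b ⬝ᵥ P u = b ⬝ᵥ P v := by
        rw [dotProduct_sub] at hb0; linarith
      refine build C a b c (-(b ⬝ᵥ P u)) ha hbs ?_
      intro p hp
      by_cases hp1 : p = P u
      · subst hp1; exact Or.inr ⟨by ring, hsu⟩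
      · by_cases hp2 : p = P v
        · subst hp2; exact Or.inr ⟨by rw [← hbeq]; ring, hsv⟩
        · refine Or.inl (hvan p ⟨hp, ?_⟩)
          simp only [Set.mem_insert_iff, Set.mem_singleton_iff]
          push_neg
          exact ⟨hp1, hp2⟩
    · -- at most four points
      have hne : C.Nonempty := by
        rcases C.eq_empty_or_nonempty with rfl | h
        · exact absurd ⟨Pi.single 0 1, 0, fun h => by simpa using congrFun h 0,
            by simp⟩ hcop
        · exact h
      obtain ⟨s, hs⟩ := hne
      have hA : (C \ {s}).ncard ≤ 3 := by
        rw [Set.ncard_diff_singleton_of_mem hs]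
        omega
      obtain ⟨a, c, ha, hvan⟩ := vanish (C \ {s}) (hfin.diff) hA
      -- fix the sign at s
      obtain ⟨a, c, ha, hvan, hsign⟩ :
          ∃ (a : Fin 3 → ℝ) (c : ℝ), a ≠ 0 ∧ (∀ p ∈ C \ {s}, a ⬝ᵥ p + c = 0) ∧
            0 ≤ a ⬝ᵥ s + c := by
        rcases le_total 0 (a ⬝ᵥ s + c) with h | h
        · exact ⟨a, c, ha, hvan, h⟩
        · refine ⟨-a, -c, neg_ne_zero.2 ha, fun p hp => ?_, ?_⟩
          · rw [neg_dotProduct]; have := hvan p hp; linarith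
          · rw [neg_dotProduct]; linarith
      obtain ⟨b, -, hbs⟩ := avoid2 a (Pi.single 0 1)
        (fun h => by simpa using congrFun h 0)
      refine build C a b c (-(b ⬝ᵥ s)) ha hbs ?_
      intro p hp
      by_cases hps : p = s
      · subst hps
        exact Or.inr ⟨by ring, hsign⟩
      · exact Or.inl (hvan p ⟨hp, hps⟩)

def q1 : Fin 3 → ℝ := ![1,0,0]
def q2 : Fin 3 → ℝ := ![-1,0,0]
def q3 : Fin 3 → ℝ := ![0,1,0]
def q4 : Fin 3 → ℝ := ![0,-1,0]
def q5 : Fin 3 → ℝ := ![0,0,1]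
def q6 : Fin 3 → ℝ := ![0,0,-1]

def C6 : Set (Fin 3 → ℝ) := {q1, q2, q3, q4, q5, q6}

lemma C6_encard : C6.encard = 6 := by
  have h12 : q1 ≠ q2 := fun h => by have := congrFun h 0; norm_num [q1, q2] at this
  have h13 : q1 ≠ q3 := fun h => by have := congrFun h 0; norm_num [q1, q3] at this
  have h14 : q1 ≠ q4 := fun h => by have := congrFun h 0; norm_num [q1, q4] at this
  have h15 : q1 ≠ q5 := fun h => by have := congrFun h 0; norm_num [q1, q5] at this
  have h16 : q1 ≠ q6 := fun h => by have := congrFun h 0; norm_num [q1, q6] at this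
  have h23 : q2 ≠ q3 := fun h => by have := congrFun h 0; norm_num [q2, q3] at this
  have h24 : q2 ≠ q4 := fun h => by have := congrFun h 0; norm_num [q2, q4] at this
  have h25 : q2 ≠ q5 := fun h => by have := congrFun h 0; norm_num [q2, q5] at this
  have h26 : q2 ≠ q6 := fun h => by have := congrFun h 0; norm_num [q2, q6] at this
  have h34 : q3 ≠ q4 := fun h => by have := congrFun h 1; norm_num [q3, q4] at this
  have h35 : q3 ≠ q5 := fun h => by have := congrFun h 1; norm_num [q3, q5] at this
  have h36 : q3 ≠ q6 := fun h => by have := congrFun h 1; norm_num [q3, q6] at this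
  have h45 : q4 ≠ q5 := fun h => by have := congrFun h 1; norm_num [q4, q5] at this
  have h46 : q4 ≠ q6 := fun h => by have := congrFun h 1; norm_num [q4, q6] at this
  have h56 : q5 ≠ q6 := fun h => by have := congrFun h 2; norm_num [q5, q6, Matrix.cons_val_two] at this
  rw [C6]
  rw [Set.encard_insert_of_notMem (by simp [h12, h13, h14, h15, h16]),
    Set.encard_insert_of_notMem (by simp [h23, h24, h25, h26]),
    Set.encard_insert_of_notMem (by simp [h34, h35, h36]),
    Set.encard_insert_of_notMem (by simp [h45, h46]),
    Set.encard_insert_of_notMem (by simp [h56]),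
    Set.encard_singleton]
  rfl

set_option maxHeartbeats 1000000 in
lemma C6_not_tshaped : ¬ IsTShaped 2 C6 := by
  rintro ⟨f, hf⟩
  have hrep0 : ∀ p : Fin 3 → ℝ, f p = f.linear p + f 0 := by
    intro p
    have := f.map_vadd 0 p
    simpa [vadd_eq_add] using this
  have hbasis : ∀ p : Fin 3 → ℝ,
      p = p 0 • (Pi.single 0 1 : Fin 3 → ℝ) + p 1 • (Pi.single 1 1 : Fin 3 → ℝ) + p 2 • (Pi.single 2 1 : Fin 3 → ℝ) := by
    intro p; funext j; fin_cases j <;> simp [Pi.single_apply]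
  have hlin : ∀ (p : Fin 3 → ℝ) (i : Fin 3), f.linear p i =
      p 0 * f.linear (Pi.single 0 1) i + p 1 * f.linear (Pi.single 1 1) i +
        p 2 * f.linear (Pi.single 2 1) i := by
    intro p i
    conv_lhs => rw [hbasis p]
    rw [map_add, map_add, _root_.map_smul, _root_.map_smul, _root_.map_smul]
    simp
  set c : ℝ := f 0 2 with hcdef
  set a0 : ℝ := f.linear (Pi.single 0 1) 2 with ha0def
  set a1 : ℝ := f.linear (Pi.single 1 1) 2 with ha1def
  set a2 : ℝ := f.linear (Pi.single 2 1) 2 with ha2def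
  set d : ℝ := f 0 1 with hddef
  set b0 : ℝ := f.linear (Pi.single 0 1) 1 with hb0def
  set b1 : ℝ := f.linear (Pi.single 1 1) 1 with hb1def
  set b2 : ℝ := f.linear (Pi.single 2 1) 1 with hb2def
  have hv : ∀ p : Fin 3 → ℝ, f p 2 = c + p 0 * a0 + p 1 * a1 + p 2 * a2 := by
    intro p
    rw [hrep0 p, Pi.add_apply, hlin p 2]
    ring
  have hg : ∀ p : Fin 3 → ℝ, f p 1 = d + p 0 * b0 + p 1 * b1 + p 2 * b2 := by
    intro p
    rw [hrep0 p, Pi.add_apply, hlin p 1]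
    ring
  have hdep : ∀ α β : ℝ, α * a0 + β * b0 = 0 → α * a1 + β * b1 = 0 →
      α * a2 + β * b2 = 0 → α = 0 ∧ β = 0 := by
    intro α β k0 k1 k2
    have hz : ∀ x : Fin 3 → ℝ, α * f.linear x 2 + β * f.linear x 1 = 0 := by
      intro x
      rw [hlin x 2, hlin x 1]
      linear_combination x 0 * k0 + x 1 * k1 + x 2 * k2
    constructor
    · obtain ⟨y, hy⟩ := f.linear.surjective (Pi.single 2 1)
      have h := hz y; rw [hy] at h; simpa using h
    · obtain ⟨y, hy⟩ := f.linear.surjective (Pi.single 1 1)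
      have h := hz y; rw [hy] at h; simpa using h
  have hq1 := hf q1 (by simp [C6])
  have hq2 := hf q2 (by simp [C6])
  have hq3 := hf q3 (by simp [C6])
  have hq4 := hf q4 (by simp [C6])
  have hq5 := hf q5 (by simp [C6])
  have hq6 := hf q6 (by simp [C6])
  rw [mem_Tset2, hv, hg] at hq1 hq2 hq3 hq4 hq5 hq6
  norm_num [q1, Matrix.cons_val_two] at hq1
  norm_num [q2, Matrix.cons_val_two] at hq2
  norm_num [q3, Matrix.cons_val_two] at hq3
  norm_num [q4, Matrix.cons_val_two] at hq4
  norm_num [q5, Matrix.cons_val_two] at hq5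
  norm_num [q6, Matrix.cons_val_two] at hq6
  rcases hq1 with h1 | ⟨g1, i1⟩ <;>
  rcases hq2 with h2 | ⟨g2, i2⟩ <;>
  rcases hq3 with h3 | ⟨g3, i3⟩ <;>
  rcases hq4 with h4 | ⟨g4, i4⟩ <;>
  rcases hq5 with h5 | ⟨g5, i5⟩ <;>
  rcases hq6 with h6 | ⟨g6, i6⟩
  all_goals first
  | exact absurd (hdep 1 0 (by linarith) (by linarith) (by linarith)).1 one_ne_zero
  | exact absurd (hdep 0 1 (by linarith) (by linarith) (by linarith)).2 one_ne_zero
  | (obtain ⟨hd0, hc0⟩ := hdep d c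
      (by first
          | linear_combination d * h1 - c * g2
          | linear_combination c * g1 - d * h2)
      (by first
          | linear_combination d * h3 - c * g4
          | linear_combination c * g3 - d * h4)
      (by first
          | linear_combination d * h5 - c * g6
          | linear_combination c * g5 - d * h6)
     exact absurd (hdep 1 0 (by linarith) (by linarith) (by linarith)).1 one_ne_zero)

/-- There is a 6-element non-T-shaped subset of `ℝ³`, and every subset with
fewer than 6 elements is T-shaped; hence `t(ℝ³) = 6`. -/
theorem exists_six_point_non_tShaped :
    (∃ C : Set (Fin 3 → ℝ), C.encard = 6 ∧ ¬ IsTShaped 2 C) ∧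
    (∀ C : Set (Fin 3 → ℝ), C.encard < 6 → IsTShaped 2 C) :=
  ⟨⟨C6, C6_encard, C6_not_tshaped⟩, part2⟩
end

section
/- For every n ≥ 1 there exists a set of n² − n + 1 points in ℝⁿ in general position (no n+1 of them lie in a hyperplane), and any such set is not T-shaped; consequently t(ℝⁿ) ≤ n² − n + 1. -/
/-- A set of points of `ℝᵐ` is in general position if no `m + 1` of them lie in
a common affine hyperplane `{x | Σᵢ v i * x i = c}` (with normal `v ≠ 0`). -/
def InGenPos (m : ℕ) (C : Set (Fin m → ℝ)) : Prop :=
  ∀ F ⊆ C, F.encard = m + 1 →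
    ¬ ∃ (v : Fin m → ℝ) (c : ℝ), v ≠ 0 ∧ ∀ x ∈ F, (∑ i, v i * x i) = c

lemma Tset_exists_zero : ∀ (n : ℕ) (x : Fin n → ℝ), x ∈ Tset n → ∃ i, x i = 0
  | 0, _, hx => absurd hx (by simp [Tset])
  | n + 1, x, hx => by
    rcases hx with h | ⟨h, -⟩
    · exact ⟨Fin.last n, h⟩
    · obtain ⟨i, hi⟩ := Tset_exists_zero n _ h
      exact ⟨i.castSucc, hi⟩

/-- The moment curve. -/
noncomputable def momp (m : ℕ) (t : ℝ) : Fin m → ℝ := fun i => t ^ ((i : ℕ) + 1)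

lemma momp_injective (m : ℕ) (hm : 0 < m) : Function.Injective (momp m) := by
  intro t s h
  have := congrFun h ⟨0, hm⟩
  simpa [momp] using this

/-- The image of any set under the moment curve is in general position. -/
lemma momp_genPos (m : ℕ) (hm : 0 < m) (S : Set ℝ) : InGenPos m (momp m '' S) := by
  intro F hF hFcard ⟨v, c, hv, heq⟩
  -- the first coordinates of points of F are distinct roots of a poly of degree ≤ m
  set q : (Fin m → ℝ) → ℝ := fun x => x ⟨0, hm⟩ with hq
  have hx_eq : ∀ x ∈ F, x = momp m (q x) := by
    intro x hx
    obtain ⟨t, -, rfl⟩ := hF hx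
    simp [momp, hq]
  have hinj : Set.InjOn q F := by
    intro x hx y hy hxy
    rw [hx_eq x hx, hx_eq y hy, hxy]
  set R : Set ℝ := q '' F with hR
  have hRcard : R.encard = ((m + 1 : ℕ) : ℕ∞) := by
    rw [hR, hinj.encard_image, hFcard]; push_cast; ring
  have hRfin : R.Finite := Set.finite_of_encard_eq_coe hRcard
  set P : Polynomial ℝ :=
    (∑ i : Fin m, Polynomial.monomial ((i : ℕ) + 1) (v i)) - Polynomial.C c with hP
  have hdeg : P.natDegree ≤ m := by
    refine (Polynomial.natDegree_sub_le _ _).trans (max_le ?_ (by simp))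
    refine Polynomial.natDegree_sum_le_of_forall_le _ _ fun i _ => ?_
    exact (Polynomial.natDegree_monomial_le _).trans (by omega)
  have heval : ∀ t ∈ hRfin.toFinset, P.eval t = 0 := by
    intro t ht
    rw [Set.Finite.mem_toFinset] at ht
    obtain ⟨x, hx, rfl⟩ := ht
    have hxe := hx_eq x hx
    have := heq x hx
    rw [hP]
    simp only [Polynomial.eval_sub, Polynomial.eval_finset_sum, Polynomial.eval_monomial,
      Polynomial.eval_C, sub_eq_zero]
    rw [← this]
    refine Finset.sum_congr rfl fun i _ => ?_
    conv_rhs => rw [hxe]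
    simp [momp]
  have hcard : P.natDegree < hRfin.toFinset.card := by
    have h1 : (R.encard : ℕ∞) = hRfin.toFinset.card := hRfin.encard_eq_coe_toFinset_card
    rw [hRcard] at h1
    have : hRfin.toFinset.card = m + 1 := by exact_mod_cast h1.symm
    omega
  have hP0 : P = 0 :=
    Polynomial.eq_zero_of_natDegree_lt_card_of_eval_eq_zero' P _ heval hcard
  apply hv
  funext i
  have : P.coeff ((i : ℕ) + 1) = v i := by
    rw [hP]
    simp only [Polynomial.coeff_sub, Polynomial.finset_sum_coeff, Polynomial.coeff_monomial,
      Polynomial.coeff_C]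
    rw [Finset.sum_eq_single i]
    · simp
    · intro j _ hji
      rw [if_neg]
      intro h
      exact hji (Fin.val_injective (by omega))
    · simp
  rw [hP0] at this
  simpa using this.symm

/-- For every dimension `m = n + 1 ≥ 1` there is a set of `m² - m + 1` points of
`ℝᵐ` in general position, and any such set is not T-shaped; consequently
`t(ℝᵐ) ≤ m² - m + 1`. -/
theorem genPos_set_exists_and_not_tShaped (n : ℕ) :
    (∃ C : Set (Fin (n + 1) → ℝ),
      C.encard = ((n + 1) ^ 2 - (n + 1) + 1 : ℕ) ∧ InGenPos (n + 1) C) ∧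
    (∀ C : Set (Fin (n + 1) → ℝ),
      C.encard = ((n + 1) ^ 2 - (n + 1) + 1 : ℕ) → InGenPos (n + 1) C →
        ¬ IsTShaped n C) := by
  have hNN : (n + 1) ^ 2 - (n + 1) + 1 = n * (n + 1) + 1 := by
    have h1 : (n + 1) ^ 2 = n * (n + 1) + (n + 1) := by ring
    omega
  constructor
  · -- existence: points on the moment curve
    set N := (n + 1) ^ 2 - (n + 1) + 1 with hN
    refine ⟨momp (n + 1) '' ((↑) '' {i : ℕ | i < N}), ?_, momp_genPos _ (Nat.succ_pos n) _⟩
    rw [Set.InjOn.encard_image ((momp_injective _ (Nat.succ_pos n)).injOn),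
      Set.InjOn.encard_image (Nat.cast_injective.injOn), Set.Nat.encard_range]
  · rintro C hcard hgen ⟨f, hf⟩
    have hfin : C.Finite := Set.finite_of_encard_eq_coe hcard
    haveI : Fintype C := hfin.fintype
    have hCcard : Fintype.card C = n * (n + 1) + 1 := by
      have h1 := Set.encard_eq_coe_toFinset_card C
      rw [hcard, Set.toFinset_card] at h1
      have : (n + 1) ^ 2 - (n + 1) + 1 = Fintype.card C := by exact_mod_cast h1
      omega
    have hg : ∀ x : C, ∃ i : Fin n, f x.val i.succ = 0 := fun x =>
      Tset_exists_zero n _ (hf x.val x.prop)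
    choose g hgz using hg
    classical
    obtain ⟨i, -, hi⟩ :=
      Finset.exists_lt_card_fiber_of_mul_lt_card_of_maps_to
        (s := (Finset.univ : Finset C)) (t := (Finset.univ : Finset (Fin n)))
        (f := g) (n := n + 1) (fun a _ => Finset.mem_univ _)
        (by rw [Finset.card_univ, Finset.card_univ, hCcard, Fintype.card_fin]; omega)
    set s₁ := (Finset.univ : Finset C).filter (fun x => g x = i) with hs₁
    have hle : ((n + 2 : ℕ) : ℕ∞) ≤ (↑s₁ : Set C).encard := by
      rw [Set.encard_coe_eq_coe_finsetCard]
      exact_mod_cast hi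
    obtain ⟨F₀, hF₀sub, hF₀card⟩ := Set.exists_subset_encard_eq hle
    set F : Set (Fin (n + 1) → ℝ) := Subtype.val '' F₀ with hF
    have hFsub : F ⊆ C := by
      rintro x ⟨y, -, rfl⟩; exact y.prop
    have hFcard : F.encard = ((n + 1 : ℕ) : ℕ∞) + 1 := by
      rw [hF, Set.InjOn.encard_image Subtype.val_injective.injOn, hF₀card]
      push_cast; ring
    have hzero : ∀ x ∈ F, f x i.succ = 0 := by
      rintro x ⟨y, hy, rfl⟩
      have : g y = i := by
        have h2 := hF₀sub hy
        simp only [hs₁, Finset.coe_filter, Set.mem_setOf_eq] at h2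
        exact h2.2
      rw [← this]; exact hgz y
    -- build the hyperplane
    set v : Fin (n + 1) → ℝ :=
      fun j => f.linear (fun k => if j = k then (1 : ℝ) else 0) i.succ with hv
    have hlin : ∀ x : Fin (n + 1) → ℝ, f.linear x i.succ = ∑ j, v j * x j := by
      intro x
      conv_lhs => rw [pi_eq_sum_univ x]
      rw [map_sum]
      rw [Finset.sum_apply]
      refine Finset.sum_congr rfl fun j _ => ?_
      rw [map_smul]
      simp [hv, mul_comm]
    have hvne : v ≠ 0 := by
      intro h0
      have h1 : f.linear (f.linear.symm (Pi.single i.succ 1)) i.succ = 1 := by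
        rw [LinearEquiv.apply_symm_apply]; simp
      rw [hlin, h0] at h1
      simp at h1
    have hdecomp : ∀ x : Fin (n + 1) → ℝ, f x = f.linear x + f 0 := by
      intro x
      have := AffineMap.decomp (f : (Fin (n + 1) → ℝ) →ᵃ[ℝ] (Fin (n + 1) → ℝ))
      have h2 := congrFun this x
      simpa using h2
    refine hgen F hFsub hFcard ⟨v, -(f 0 i.succ), hvne, fun x hx => ?_⟩
    have h0 := hzero x hx
    have h1 := congrFun (hdecomp x) i.succ
    rw [h0] at h1
    rw [← hlin]
    simp only [Pi.add_apply] at h1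
    linarith
end

section
/- For every n ≥ 2, t(ℝⁿ) ≥ min{2·t(ℝ^{n−1}), t(ℝ^{n−1}) + n + 1}; that is, every subset C ⊆ ℝⁿ of cardinality strictly less than min{2·t(ℝ^{n−1}), t(ℝ^{n−1}) + n + 1} is T-shaped. -/
/-- `tNum n = t(ℝ^{n+1})`, the least cardinality of a non-T-shaped subset of
`ℝ^{n+1}`. -/
noncomputable def tNum (n : ℕ) : ℕ :=
  sInf {m : ℕ | ∃ C : Set (Fin (n + 1) → ℝ), C.encard = m ∧ ¬ IsTShaped n C}



open Module Set

lemma exists_ann {d : ℕ} (W : Submodule ℝ (Fin d → ℝ)) (h : W ≠ ⊤) :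
    ∃ φ : (Fin d → ℝ) →ₗ[ℝ] ℝ, φ ≠ 0 ∧ ∀ w ∈ W, φ w = 0 := by
  obtain ⟨f, hf, hmap⟩ := W.exists_dual_map_eq_bot_of_lt_top (lt_top_iff_ne_top.2 h)
    inferInstance
  refine ⟨f, hf, fun w hw => ?_⟩
  have : f w ∈ W.map f := ⟨w, hw, rfl⟩
  rw [hmap] at this
  simpa using this

lemma exists_unit_vec {d : ℕ} (φ : (Fin d → ℝ) →ₗ[ℝ] ℝ) (hφ : φ ≠ 0) :
    ∃ v, φ v = 1 := by
  obtain ⟨w, hw⟩ : ∃ w, φ w ≠ 0 := by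
    by_contra h
    push_neg at h
    exact hφ (LinearMap.ext fun x => by simp [h x])
  exact ⟨(φ w)⁻¹ • w, by simp [map_smul, inv_mul_cancel₀ hw]⟩

lemma rotate {n : ℕ} {C : Set (Fin (n + 2) → ℝ)} (hCfin : C.Finite)
    (hfull : ∀ ψ : (Fin (n + 2) → ℝ) →ₗ[ℝ] ℝ, ψ ≠ 0 → ∃ x ∈ C, ∃ y ∈ C, ψ x ≠ ψ y)
    (φ : (Fin (n + 2) → ℝ) →ₗ[ℝ] ℝ) (c : ℝ) (hφ : φ ≠ 0)
    (hsupp : ∀ x ∈ C, c ≤ φ x)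
    (hA1 : {x ∈ C | φ x = c}.Nonempty) (hA2 : {x ∈ C | φ x = c}.ncard ≤ n + 1) :
    ∃ ψ : (Fin (n + 2) → ℝ) →ₗ[ℝ] ℝ, ∃ c' : ℝ, ψ ≠ 0 ∧ (∀ x ∈ C, c' ≤ ψ x) ∧
      {x ∈ C | φ x = c}.ncard + 1 ≤ {x ∈ C | ψ x = c'}.ncard := by
  set A := {x ∈ C | φ x = c} with hA
  have hAfin : A.Finite := hCfin.subset (sep_subset _ _)
  obtain ⟨a₀, ha₀⟩ := hA1
  obtain ⟨u, hu⟩ := exists_unit_vec φ hφ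
  -- the span to annihilate
  set S : Set (Fin (n + 2) → ℝ) := insert u ((fun a => a - a₀) '' (A \ {a₀})) with hS
  have hSfin : S.Finite := ((hAfin.diff).image _).insert _
  have hW : Submodule.span ℝ S ≠ ⊤ := by
    intro htop
    have h1 : finrank ℝ (Submodule.span ℝ S) ≤ hSfin.toFinset.card := by
      have := finrank_span_finset_le_card (R := ℝ) hSfin.toFinset
      rwa [Set.Finite.coe_toFinset] at this
    have h2 : hSfin.toFinset.card ≤ n + 1 := by
      rw [← Set.ncard_eq_toFinset_card S hSfin]
      have hcard : ((fun a => a - a₀) '' (A \ {a₀})).ncard ≤ n := by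
        refine le_trans (Set.ncard_image_le (hAfin.diff)) ?_
        have h3 := Set.ncard_diff_singleton_of_mem ha₀
        have h4 : 0 < A.ncard := (Set.ncard_pos hAfin).2 ⟨a₀, ha₀⟩
        omega
      calc S.ncard ≤ ((fun a => a - a₀) '' (A \ {a₀})).ncard + 1 :=
            Set.ncard_insert_le _ _
        _ ≤ n + 1 := by omega
    rw [htop] at h1
    rw [finrank_top, Module.finrank_fin_fun] at h1
    omega
  obtain ⟨χ₀, hχ₀ne, hχ₀W⟩ := exists_ann _ hW
  have hkey : ∀ (χ : (Fin (n + 2) → ℝ) →ₗ[ℝ] ℝ), (∀ w ∈ Submodule.span ℝ S, χ w = 0) →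
      (∀ a ∈ A, χ a = χ a₀) ∧ χ u = 0 := by
    intro χ hχ
    constructor
    · intro a ha
      by_cases h : a = a₀
      · rw [h]
      · have : a - a₀ ∈ S := Or.inr ⟨a, ⟨ha, h⟩, rfl⟩
        have := hχ _ (Submodule.subset_span this)
        rw [map_sub] at this
        linarith
    · exact hχ _ (Submodule.subset_span (Or.inl rfl))
  -- pick a sign so that some point is strictly above
  obtain ⟨χ, hχA, hχu, b, hbC, hbgt⟩ :
      ∃ χ : (Fin (n + 2) → ℝ) →ₗ[ℝ] ℝ, (∀ a ∈ A, χ a = χ a₀) ∧ χ u = 0 ∧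
        ∃ b ∈ C, χ a₀ < χ b := by
    obtain ⟨x, hx, y, hy, hxy⟩ := hfull χ₀ hχ₀ne
    obtain ⟨h1, h2⟩ := hkey χ₀ hχ₀W
    have hb : ∃ b ∈ C, χ₀ b ≠ χ₀ a₀ := by
      by_contra h
      push_neg at h
      exact hxy ((h x hx).trans (h y hy).symm)
    obtain ⟨b, hbC, hbne⟩ := hb
    rcases lt_or_gt_of_ne hbne with h | h
    · refine ⟨-χ₀, fun a ha => ?_, by simp [h2], b, hbC, by simpa using h⟩
      simp [h1 a ha]
    · exact ⟨χ₀, h1, h2, b, hbC, h⟩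
  -- minimize the ratio over points strictly above
  set Bp := {x ∈ C | χ a₀ < χ x} with hBp
  have hBpfin : Bp.Finite := hCfin.subset (sep_subset _ _)
  have hBpne : Bp.Nonempty := ⟨b, hbC, hbgt⟩
  obtain ⟨bs, hbsBp, hbsmin⟩ := Set.exists_min_image Bp
    (fun x => (φ x - c) / (χ x - χ a₀)) hBpfin hBpne
  have hnotA : ∀ x ∈ Bp, x ∉ A := by
    intro x hx hxA
    have := hχA x hxA
    have := hx.2
    linarith
  have hstrict : ∀ x ∈ Bp, c < φ x := by
    intro x hx
    rcases lt_or_eq_of_le (hsupp x hx.1) with h | h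
    · exact h
    · exact absurd ⟨hx.1, h.symm⟩ (hnotA x hx)
  set s := (φ bs - c) / (χ bs - χ a₀) with hsdef
  have hden : 0 < χ bs - χ a₀ := by have := hbsBp.2; linarith
  have hspos : 0 < s := div_pos (by have := hstrict bs hbsBp; linarith) hden
  refine ⟨φ - s • χ, c - s * χ a₀, ?_, ?_, ?_⟩
  · intro h
    have : (φ - s • χ) u = 0 := by rw [h]; rfl
    simp [hu, hχu] at this
  · intro x hx
    simp only [LinearMap.sub_apply, LinearMap.smul_apply, smul_eq_mul]
    by_cases h : χ a₀ < χ x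
    · have hxBp : x ∈ Bp := ⟨hx, h⟩
      have hmin := hbsmin x hxBp
      have : s * (χ x - χ a₀) ≤ φ x - c := by
        rw [hsdef]
        have h2 : 0 < χ x - χ a₀ := by linarith
        calc (φ bs - c) / (χ bs - χ a₀) * (χ x - χ a₀)
            ≤ (φ x - c) / (χ x - χ a₀) * (χ x - χ a₀) := by
              apply mul_le_mul_of_nonneg_right hmin (le_of_lt h2)
          _ = φ x - c := div_mul_cancel₀ _ (ne_of_gt h2)
      nlinarith
    · push_neg at h
      have h1 := hsupp x hx
      nlinarith
  · have hsub : insert bs A ⊆ {x ∈ C | (φ - s • χ) x = c - s * χ a₀} := by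
      intro x hx
      rcases hx with rfl | hxA
      · refine ⟨hbsBp.1, ?_⟩
        simp only [LinearMap.sub_apply, LinearMap.smul_apply, smul_eq_mul]
        have : φ x - c = s * (χ x - χ a₀) := (div_mul_cancel₀ _ (ne_of_gt hden)).symm
        nlinarith [this]
      · refine ⟨hxA.1, ?_⟩
        simp only [LinearMap.sub_apply, LinearMap.smul_apply, smul_eq_mul]
        rw [hxA.2, hχA x hxA]
    have hfin2 : {x ∈ C | (φ - s • χ) x = c - s * χ a₀}.Finite :=
      hCfin.subset (sep_subset _ _)
    calc A.ncard + 1 = (insert bs A).ncard := by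
          rw [Set.ncard_insert_of_notMem (hnotA bs hbsBp) hAfin]
      _ ≤ _ := Set.ncard_le_ncard hsub hfin2

lemma proj_ne_zero {n : ℕ} : (LinearMap.proj (Fin.last (n + 1)) :
    (Fin (n + 2) → ℝ) →ₗ[ℝ] ℝ) ≠ 0 := by
  intro h
  have := congrArg (fun f => f (Pi.single (Fin.last (n + 1)) (1 : ℝ))) h
  simp [LinearMap.proj_apply] at this

lemma supp_many {n : ℕ} {C : Set (Fin (n + 2) → ℝ)} (hCfin : C.Finite)
    (hCne : C.Nonempty)
    (hfull : ∀ ψ : (Fin (n + 2) → ℝ) →ₗ[ℝ] ℝ, ψ ≠ 0 → ∃ x ∈ C, ∃ y ∈ C, ψ x ≠ ψ y)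
    (k : ℕ) (hk : k ≤ n + 2) :
    ∃ φ : (Fin (n + 2) → ℝ) →ₗ[ℝ] ℝ, ∃ c : ℝ, φ ≠ 0 ∧ (∀ x ∈ C, c ≤ φ x) ∧
      {x ∈ C | φ x = c}.Nonempty ∧ k ≤ {x ∈ C | φ x = c}.ncard := by
  induction k with
  | zero =>
    obtain ⟨a, ha, hmin⟩ := Set.exists_min_image C
      (LinearMap.proj (Fin.last (n + 1)) : (Fin (n + 2) → ℝ) →ₗ[ℝ] ℝ) hCfin hCne
    exact ⟨_, _, proj_ne_zero, hmin, ⟨a, ha, rfl⟩, Nat.zero_le _⟩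
  | succ k ih =>
    obtain ⟨φ, c, hφ, hsupp, hne, hcard⟩ := ih (Nat.le_of_succ_le hk)
    by_cases hbig : k + 1 ≤ {x ∈ C | φ x = c}.ncard
    · exact ⟨φ, c, hφ, hsupp, hne, hbig⟩
    · push_neg at hbig
      have hA2 : {x ∈ C | φ x = c}.ncard ≤ n + 1 := by omega
      obtain ⟨ψ, c', hψ, hsupp', hcard'⟩ := rotate hCfin hfull φ c hφ hsupp hne hA2
      refine ⟨ψ, c', hψ, hsupp', ?_, by omega⟩
      exact (Set.nonempty_of_ncard_ne_zero (by omega))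

lemma lemA {n t : ℕ} (ht : 1 ≤ t) {C : Set (Fin (n + 2) → ℝ)} (hCfin : C.Finite)
    (hm1 : C.ncard ≤ t + (n + 2)) (hm2 : C.ncard < 2 * t) :
    ∃ (φ : (Fin (n + 2) → ℝ) →ₗ[ℝ] ℝ) (c : ℝ) (v : Fin (n + 2) → ℝ),
      φ v = 1 ∧ (∀ x ∈ C, c ≤ φ x) ∧
      ((fun x => x - φ x • v) '' {x ∈ C | φ x ≠ c}).encard < (t : ℕ∞) := by
  by_cases hdeg : ∃ φ : (Fin (n + 2) → ℝ) →ₗ[ℝ] ℝ, φ ≠ 0 ∧ ∃ c, ∀ x ∈ C, φ x = c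
  · obtain ⟨φ, hφ, c, hc⟩ := hdeg
    obtain ⟨v, hv⟩ := exists_unit_vec φ hφ
    refine ⟨φ, c, v, hv, fun x hx => le_of_eq (hc x hx).symm, ?_⟩
    have : {x ∈ C | φ x ≠ c} = ∅ := by
      ext x; simp only [mem_setOf_eq, mem_empty_iff_false, iff_false]
      rintro ⟨hx, hne⟩; exact hne (hc x hx)
    rw [this, Set.image_empty, Set.encard_empty]
    exact_mod_cast Nat.pos_of_ne_zero (by omega)
  · push_neg at hdeg
    have hCne : C.Nonempty := by
      by_contra h
      rw [Set.not_nonempty_iff_eq_empty] at h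
      obtain ⟨x, hx, -⟩ := hdeg (LinearMap.proj (Fin.last (n + 1))) proj_ne_zero 0
      rw [h] at hx; exact hx
    have hfull : ∀ ψ : (Fin (n + 2) → ℝ) →ₗ[ℝ] ℝ, ψ ≠ 0 →
        ∃ x ∈ C, ∃ y ∈ C, ψ x ≠ ψ y := by
      intro ψ hψ
      obtain ⟨x₀, hx₀⟩ := hCne
      obtain ⟨x, hx, hne⟩ := hdeg ψ hψ (ψ x₀)
      exact ⟨x, hx, x₀, hx₀, hne⟩
    obtain ⟨φ, c, hφ, hsupp, hAne, hAcard⟩ := supp_many hCfin hCne hfull (n + 2) le_rfl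
    set A := {x ∈ C | φ x = c} with hA
    set B := {x ∈ C | φ x ≠ c} with hB
    have hAfin : A.Finite := hCfin.subset (sep_subset _ _)
    have hBfin : B.Finite := hCfin.subset (sep_subset _ _)
    have hsum : A.ncard + B.ncard = C.ncard := by
      rw [← Set.ncard_union_eq ?_ hAfin hBfin]
      · congr 1
        ext x
        simp only [hA, hB, Set.mem_union, mem_setOf_eq]
        tauto
      · rw [Set.disjoint_left]
        rintro x ⟨-, h1⟩ ⟨-, h2⟩
        exact h2 h1
    have hBle : B.ncard ≤ t := by omega
    obtain ⟨u, hu⟩ := exists_unit_vec φ hφ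
    rcases lt_or_eq_of_le hBle with hBlt | hBeq
    · -- B.ncard < t : no merging needed
      refine ⟨φ, c, u, hu, hsupp, ?_⟩
      calc ((fun x => x - φ x • u) '' B).encard ≤ B.encard := Set.encard_image_le _ _
        _ = (B.ncard : ℕ∞) := (hBfin.cast_ncard_eq).symm
        _ < (t : ℕ∞) := by exact_mod_cast hBlt
    · by_cases hpq : ∃ p ∈ B, ∃ q ∈ B, φ p ≠ φ q
      · -- merge p and q
        obtain ⟨p, hp, q, hq, hpqne⟩ := hpq
        have hd : φ (p - q) ≠ 0 := by rw [map_sub]; intro h; apply hpqne; linarith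
        set v := (φ (p - q))⁻¹ • (p - q) with hv
        have hv1 : φ v = 1 := by rw [hv, map_smul, smul_eq_mul, inv_mul_cancel₀ hd]
        refine ⟨φ, c, v, hv1, hsupp, ?_⟩
        set Q := fun x : Fin (n + 2) → ℝ => x - φ x • v with hQ
        have hQpq : Q p = Q q := by
          have h1 : (φ p - φ q) • v = p - q := by
            rw [← map_sub, hv, smul_smul, mul_inv_cancel₀ hd, one_smul]
          have h2 : φ p • v - φ q • v = p - q := by rw [← sub_smul]; exact h1
          show p - φ p • v = q - φ q • v
          rw [sub_eq_sub_iff_sub_eq_sub]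
          exact h2.symm
        have himg : Q '' B = Q '' (B \ {p}) := by
          apply Set.Subset.antisymm
          · rintro y ⟨x, hx, rfl⟩
            by_cases hxp : x = p
            · subst hxp
              exact ⟨q, ⟨hq, fun h => hpqne (by rw [h])⟩, hQpq.symm⟩
            · exact ⟨x, ⟨hx, hxp⟩, rfl⟩
          · exact Set.image_mono (Set.diff_subset)
        rw [himg]
        calc (Q '' (B \ {p})).encard ≤ (B \ {p}).encard := Set.encard_image_le _ _
          _ = ((B \ {p}).ncard : ℕ∞) := ((hBfin.diff).cast_ncard_eq).symm
          _ < (t : ℕ∞) := by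
            rw [Nat.cast_lt]
            rw [Set.ncard_diff_singleton_of_mem hp]
            omega
      · -- all of B on one parallel hyperplane; flip
        push_neg at hpq
        have hBne : B.Nonempty := Set.nonempty_of_ncard_ne_zero (by omega)
        obtain ⟨b₀, hb₀⟩ := hBne
        set c' := φ b₀ with hc'
        have hflip : ∀ x ∈ C, φ x ≤ c' := by
          intro x hx
          by_cases h : φ x = c
          · rw [h, hc']; exact hsupp b₀ hb₀.1
          · have : x ∈ B := ⟨hx, h⟩
            rw [hpq x this b₀ hb₀]
        refine ⟨-φ, -c', -u, by simp [hu], fun x hx => by simpa using hflip x hx, ?_⟩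
        have hBA : {x ∈ C | (-φ) x ≠ -c'} ⊆ A := by
          rintro x ⟨hxC, hne⟩
          have hne' : φ x ≠ c' := fun h => hne (by simp [h])
          by_cases h : φ x = c
          · exact ⟨hxC, h⟩
          · exact absurd (hpq x ⟨hxC, h⟩ b₀ hb₀) hne'
        calc ((fun x => x - (-φ) x • (-u)) '' {x ∈ C | (-φ) x ≠ -c'}).encard
            ≤ {x ∈ C | (-φ) x ≠ -c'}.encard := Set.encard_image_le _ _
          _ ≤ A.encard := Set.encard_le_encard hBA
          _ = (A.ncard : ℕ∞) := (hAfin.cast_ncard_eq).symm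
          _ < (t : ℕ∞) := by rw [Nat.cast_lt]; omega

/-- For every dimension `n + 2 ≥ 2`: any subset of `ℝ^{n+2}` of cardinality
strictly less than `min (2 ⬝ t(ℝ^{n+1})) (t(ℝ^{n+1}) + (n + 2) + 1)` is
T-shaped, i.e. `t(ℝ^{n+2}) ≥ min (2 t(ℝ^{n+1})) (t(ℝ^{n+1}) + (n+2) + 1)`. -/
theorem tNum_recursive_lower_bound (n : ℕ) (C : Set (Fin (n + 2) → ℝ))
    (hC : C.encard < (min (2 * tNum n) (tNum n + (n + 2) + 1) : ℕ)) :
    IsTShaped (n + 1) C := by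
  set t := tNum n with htdef
  rcases Nat.eq_zero_or_pos t with h0 | ht1
  · rw [h0] at hC
    simp at hC
  have hfin : C.Finite := by
    rw [← Set.encard_lt_top_iff]
    exact hC.trans_le le_top
  have hncard : C.ncard < min (2 * t) (t + (n + 2) + 1) := by
    rw [← Nat.cast_lt (α := ℕ∞), hfin.cast_ncard_eq]
    exact hC
  have hm2 : C.ncard < 2 * t := lt_of_lt_of_le hncard (min_le_left _ _)
  have hm1 : C.ncard ≤ t + (n + 2) := by
    have := lt_of_lt_of_le hncard (min_le_right _ _); omega
  have hT : ∀ D : Set (Fin (n + 1) → ℝ), D.encard < (t : ℕ∞) → IsTShaped n D := by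
    intro D hD
    by_contra hnot
    have hDfin : D.Finite := by rw [← Set.encard_lt_top_iff]; exact hD.trans_le le_top
    have hmem : D.ncard ∈
        {m : ℕ | ∃ E : Set (Fin (n + 1) → ℝ), E.encard = ↑m ∧ ¬ IsTShaped n E} :=
      ⟨D, (hDfin.cast_ncard_eq).symm, hnot⟩
    have h2 : t ≤ D.ncard := Nat.sInf_le hmem
    rw [← hDfin.cast_ncard_eq, Nat.cast_lt] at hD
    omega
  obtain ⟨φ, c, v, hv, hsupp, hcount⟩ := lemA ht1 hfin hm1 hm2
  set B := {x ∈ C | φ x ≠ c} with hB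
  have hQker : ∀ x, x - φ x • v ∈ LinearMap.ker φ := by
    intro x
    rw [LinearMap.mem_ker, map_sub, map_smul, hv, smul_eq_mul, mul_one, sub_self]
  have hrank : finrank ℝ (LinearMap.ker φ) = n + 1 := by
    have hr := LinearMap.finrank_range_add_finrank_ker φ
    have hsurj : LinearMap.range φ = ⊤ := by
      rw [LinearMap.range_eq_top]
      intro r
      exact ⟨r • v, by rw [map_smul, hv, smul_eq_mul, mul_one]⟩
    rw [hsurj, finrank_top, Module.finrank_fin_fun, Module.finrank_self] at hr
    omega
  let L : (LinearMap.ker φ) ≃ₗ[ℝ] (Fin (n + 1) → ℝ) :=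
    LinearEquiv.ofFinrankEq _ _ (by rw [hrank, Module.finrank_fin_fun])
  let Qlin : (Fin (n + 2) → ℝ) →ₗ[ℝ] (Fin (n + 2) → ℝ) := LinearMap.id - φ.smulRight v
  have hQlin : ∀ x, Qlin x = x - φ x • v := fun x => rfl
  let Q' : (Fin (n + 2) → ℝ) →ₗ[ℝ] LinearMap.ker φ := Qlin.codRestrict _ hQker
  let P : (Fin (n + 2) → ℝ) →ₗ[ℝ] (Fin (n + 1) → ℝ) := L.toLinearMap ∘ₗ Q'
  set D := P '' B with hD
  have hDcard : D.encard < (t : ℕ∞) := by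
    have h1 : D = (fun y : LinearMap.ker φ => L y) '' (Q' '' B) := by
      rw [hD, Set.image_image]; rfl
    have h2 : (Subtype.val '' (Q' '' B) : Set (Fin (n + 2) → ℝ)) =
        (fun x => x - φ x • v) '' B := by
      rw [Set.image_image]; rfl
    calc D.encard = (Q' '' B).encard := by
          rw [h1]; exact L.injective.encard_image _
      _ = (Subtype.val '' (Q' '' B)).encard :=
          (Subtype.val_injective.encard_image _).symm
      _ = ((fun x => x - φ x • v) '' B).encard := by rw [h2]
      _ < (t : ℕ∞) := hcount
  obtain ⟨g, hg⟩ := hT D hDcard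
  -- the linear part
  let Flin : (Fin (n + 2) → ℝ) →ₗ[ℝ] (Fin (n + 2) → ℝ) :=
    LinearMap.pi (fun i => Fin.lastCases φ (fun j => (LinearMap.proj j) ∘ₗ P) i)
  have hFlast : ∀ x, Flin x (Fin.last (n + 1)) = φ x := by
    intro x
    simp only [Flin, LinearMap.pi_apply, Fin.lastCases_last]
  have hFcast : ∀ x (j : Fin (n + 1)), Flin x j.castSucc = P x j := by
    intro x j
    simp only [Flin, LinearMap.pi_apply, Fin.lastCases_castSucc, LinearMap.comp_apply,
      LinearMap.proj_apply]
  have hFinj : Function.Injective Flin := by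
    rw [← LinearMap.ker_eq_bot, LinearMap.ker_eq_bot']
    intro x hx
    have h1 : φ x = 0 := by rw [← hFlast x, hx]; rfl
    have h2 : P x = 0 := by
      funext j
      rw [← hFcast x j, hx]; rfl
    have h3 : Q' x = 0 := L.map_eq_zero_iff.mp h2
    have h4 : x - φ x • v = 0 := congrArg Subtype.val h3
    rw [h1, zero_smul, sub_zero] at h4
    exact h4
  let Feq : (Fin (n + 2) → ℝ) ≃ₗ[ℝ] (Fin (n + 2) → ℝ) :=
    Flin.linearEquivOfInjective hFinj rfl
  have hFeq : ∀ x, Feq x = Flin x := fun x => Flin.linearEquivOfInjective_apply hFinj rfl x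
  -- translation
  set w : Fin (n + 2) → ℝ := fun i => if i = Fin.last (n + 1) then -c else 0 with hw
  let Faff : (Fin (n + 2) → ℝ) ≃ᵃ[ℝ] (Fin (n + 2) → ℝ) :=
    Feq.toAffineEquiv.trans (AffineEquiv.constVAdd ℝ _ w)
  have hFaff : ∀ x, Faff x = w + Flin x := by
    intro x
    show w +ᵥ Feq x = w + Flin x
    rw [hFeq]
    rfl
  have hFaffLast : ∀ x, Faff x (Fin.last (n + 1)) = φ x - c := by
    intro x
    rw [hFaff]
    show w (Fin.last (n + 1)) + Flin x (Fin.last (n + 1)) = _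
    rw [hFlast, hw]
    simp [sub_eq_neg_add]
  have hFaffCast : ∀ x (j : Fin (n + 1)), Faff x j.castSucc = P x j := by
    intro x j
    rw [hFaff]
    show w j.castSucc + Flin x j.castSucc = _
    rw [hFcast, hw]
    simp [(Fin.castSucc_lt_last j).ne]
  -- product decomposition
  let e : (Fin (n + 2) → ℝ) ≃ₗ[ℝ] (Fin (n + 1) → ℝ) × ℝ :=
    { toFun := fun y => (fun j => y j.castSucc, y (Fin.last (n + 1)))
      invFun := fun p => (Fin.snoc p.1 p.2 : Fin (n + 2) → ℝ)
      map_add' := fun a b => rfl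
      map_smul' := fun r a => rfl
      left_inv := fun y => Fin.snoc_init_self y
      right_inv := fun p => by
        have h1 : (fun j : Fin (n + 1) => (Fin.snoc p.1 p.2 : Fin (n + 2) → ℝ) j.castSucc) = p.1 := by
          funext j; exact Fin.snoc_castSucc _ _ _
        have h2 : (Fin.snoc p.1 p.2 : Fin (n + 2) → ℝ) (Fin.last (n + 1)) = p.2 := Fin.snoc_last _ _
        rw [Prod.ext_iff]
        exact ⟨h1, h2⟩ }
  let pg : ((Fin (n + 1) → ℝ) × ℝ) ≃ᵃ[ℝ] ((Fin (n + 1) → ℝ) × ℝ) :=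
    { toEquiv := g.toEquiv.prodCongr (Equiv.refl ℝ)
      linear := g.linear.prodCongr (LinearEquiv.refl ℝ ℝ)
      map_vadd' := by
        intro p vv
        show (g (vv.1 +ᵥ p.1), vv.2 + p.2) = (g.linear vv.1 +ᵥ g p.1, vv.2 + p.2)
        rw [g.map_vadd] }
  let Gaff := e.toAffineEquiv.trans (pg.trans e.symm.toAffineEquiv)
  refine ⟨Faff.trans Gaff, ?_⟩
  intro x hx
  have hfx : (Faff.trans Gaff) x = (Fin.snoc (g (P x)) (φ x - c) : Fin (n + 2) → ℝ) := by
    show e.symm (pg.toEquiv (e (Faff x))) = _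
    have h1 : e (Faff x) = (P x, φ x - c) := by
      show ((fun j : Fin (n + 1) => Faff x j.castSucc), Faff x (Fin.last (n + 1))) = ((P x : Fin (n + 1) → ℝ), φ x - c)
      rw [Prod.ext_iff]
      exact ⟨funext (hFaffCast x), hFaffLast x⟩
    rw [h1]
    rfl
  -- check membership in Tset (n+1)
  show (fun i : Fin (n + 1) => (Faff.trans Gaff) x i.succ) ∈ Tset (n + 1)
  rw [hfx]
  have hlastc : (fun i : Fin (n + 1) => (Fin.snoc (g (P x)) (φ x - c) : Fin (n + 2) → ℝ) i.succ) (Fin.last n)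
      = φ x - c := by
    simp only [Fin.succ_last, Fin.snoc_last]
  by_cases hxc : φ x = c
  · left
    rw [hlastc, hxc, sub_self]
  · right
    constructor
    · have hmem : P x ∈ D := ⟨x, ⟨hx, hxc⟩, rfl⟩
      have := hg (P x) hmem
      convert this using 1
      funext i
      show (Fin.snoc (g (P x)) (φ x - c) : Fin (n + 2) → ℝ) (i.castSucc.succ) = g (P x) i.succ
      rw [Fin.succ_castSucc, Fin.snoc_castSucc]
    · rw [hlastc]
      have := hsupp x hx
      linarith
end

section
/- For every n ≥ 1, t(ℝⁿ) ≥ n(n+1)/2. -/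
namespace TProof

/-- affine functional from linear part and constant -/
noncomputable def aff {d : ℕ} (φ : (Fin d → ℝ) →ₗ[ℝ] ℝ) (r : ℝ) : (Fin d → ℝ) →ᵃ[ℝ] ℝ where
  toFun := fun x => φ x + r
  linear := φ
  map_vadd' := by
    intro p v
    simp [vadd_eq_add, map_add]
    ring

lemma eq_zero_of_vanish {d : ℕ} {C : Set (Fin d → ℝ)} (hspan : affineSpan ℝ C = ⊤)
    (φ : (Fin d → ℝ) →ₗ[ℝ] ℝ) (r : ℝ) (h0 : ∀ x ∈ C, φ x + r = 0) : φ = 0 ∧ r = 0 := by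
  have hne : C.Nonempty := by
    by_contra h
    rw [Set.not_nonempty_iff_eq_empty] at h
    subst h
    rw [AffineSubspace.span_empty] at hspan
    have : (0 : Fin d → ℝ) ∈ (⊥ : AffineSubspace ℝ (Fin d → ℝ)) := by
      rw [hspan]; trivial
    exact this
  obtain ⟨a, ha⟩ := hne
  have hφ : φ = 0 := by
    have hv : vectorSpan ℝ C = ⊤ := by
      rw [← direction_affineSpan, hspan, AffineSubspace.direction_top]
    rw [vectorSpan_eq_span_vsub_set_right ℝ ha] at hv
    refine LinearMap.ext_on hv ?_
    rintro v ⟨x, hx, rfl⟩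
    have h1 := h0 x hx
    have h2 := h0 a ha
    simp only [vsub_eq_sub, map_sub, LinearMap.zero_apply]
    linarith
  refine ⟨hφ, ?_⟩
  have := h0 a ha
  rw [hφ] at this
  simpa using this

lemma exists_sep {d : ℕ} {s : Set (Fin d → ℝ)} {c p : Fin d → ℝ} (hc : c ∈ s)
    (hp : p ∉ affineSpan ℝ s) :
    ∃ (φ : (Fin d → ℝ) →ₗ[ℝ] ℝ) (r : ℝ), (∀ x ∈ affineSpan ℝ s, φ x + r = 0) ∧ φ p + r ≠ 0 := by
  set A := affineSpan ℝ s with hA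
  have hcA : c ∈ A := subset_affineSpan ℝ s hc
  set W := A.direction with hW
  have hpW : p - c ∉ W := by
    rw [← vsub_eq_sub]
    intro h
    exact hp ((AffineSubspace.vsub_right_mem_direction_iff_mem hcA p).1 h)
  have hq : (Submodule.Quotient.mk (p - c) : (Fin d → ℝ) ⧸ W) ≠ 0 := by
    rw [Ne, Submodule.Quotient.mk_eq_zero]; exact hpW
  obtain ⟨ψ, hψ⟩ : ∃ ψ : Module.Dual ℝ ((Fin d → ℝ) ⧸ W), ψ (Submodule.Quotient.mk (p - c)) ≠ 0 := by
    by_contra h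
    push_neg at h
    exact hq ((Module.forall_dual_apply_eq_zero_iff ℝ _).1 h)
  have key : ∀ y : Fin d → ℝ, (ψ.comp W.mkQ) y + (-(ψ.comp W.mkQ) c) = ψ (Submodule.Quotient.mk (y - c)) := by
    intro y
    have : W.mkQ (y - c) = W.mkQ y - W.mkQ c := by rw [map_sub]
    simp only [LinearMap.comp_apply, Submodule.mkQ_apply] at *
    rw [show (Submodule.Quotient.mk (y - c) : (Fin d → ℝ) ⧸ W) = Submodule.Quotient.mk y - Submodule.Quotient.mk c from this, map_sub]
    ring
  refine ⟨ψ.comp W.mkQ, -(ψ.comp W.mkQ) c, ?_, ?_⟩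
  · intro x hx
    rw [key x]
    have hxw : x - c ∈ W := by
      rw [← vsub_eq_sub]; exact AffineSubspace.vsub_mem_direction hx hcA
    have : (Submodule.Quotient.mk (x - c) : (Fin d → ℝ) ⧸ W) = 0 := by
      rw [Submodule.Quotient.mk_eq_zero]; exact hxw
    rw [this, map_zero]
  · rw [key p]; exact hψ

lemma affineSpan_ne_top_of_ncard_le {d : ℕ} {s : Set (Fin d → ℝ)} (hs : s.Finite)
    (hcard : s.ncard ≤ d) : affineSpan ℝ s ≠ ⊤ := by
  intro htop
  rcases Set.eq_empty_or_nonempty s with rfl | ⟨c, hc⟩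
  · rw [AffineSubspace.span_empty] at htop
    have : (0 : Fin d → ℝ) ∈ (⊥ : AffineSubspace ℝ (Fin d → ℝ)) := by rw [htop]; trivial
    exact this
  · have hv : vectorSpan ℝ s = ⊤ := by
      rw [← direction_affineSpan, htop, AffineSubspace.direction_top]
    rw [vectorSpan_eq_span_vsub_set_right ℝ hc] at hv
    set t := (fun x => x -ᵥ c) '' s with ht
    have htf : t.Finite := hs.image _
    have h0 : (0 : Fin d → ℝ) ∈ t := ⟨c, hc, by simp⟩
    have hsp : Submodule.span ℝ (t \ {0}) = ⊤ := by
      rw [← hv]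
      refine le_antisymm (Submodule.span_mono Set.diff_subset) (Submodule.span_le.2 ?_)
      intro v hv'
      by_cases h : v = 0
      · simp [h]
      · exact Submodule.subset_span ⟨hv', h⟩
    have htf' : (t \ {0}).Finite := htf.subset Set.diff_subset
    have hfr : Module.finrank ℝ (Submodule.span ℝ (t \ {0}) : Submodule ℝ _) ≤ (t \ {0}).ncard := by
      have h1 := finrank_span_finset_le_card (R := ℝ) htf'.toFinset
      rw [htf'.coe_toFinset] at h1
      calc Module.finrank ℝ (Submodule.span ℝ (t \ {0}) : Submodule ℝ _) ≤ htf'.toFinset.card := h1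
        _ = (t \ {0}).ncard := (Set.ncard_eq_toFinset_card _ htf').symm
    rw [hsp] at hfr
    have hd : Module.finrank ℝ (⊤ : Submodule ℝ (Fin d → ℝ)) = d := by
      rw [finrank_top, Module.finrank_pi, Fintype.card_fin]
    have hlt : (t \ {0}).ncard < t.ncard := Set.ncard_diff_singleton_lt_of_mem h0 htf
    have hle : t.ncard ≤ s.ncard := Set.ncard_image_le hs
    omega


lemma facet {d : ℕ} {C : Set (Fin (d+1) → ℝ)} (hC : C.Finite) (hspan : affineSpan ℝ C = ⊤) :
    ∃ (φ : (Fin (d+1) → ℝ) →ₗ[ℝ] ℝ) (r : ℝ), φ ≠ 0 ∧ (∀ x ∈ C, 0 ≤ φ x + r) ∧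
      d + 1 ≤ {x ∈ C | φ x + r = 0}.ncard := by
  have hCne : C.Nonempty := by
    by_contra h
    rw [Set.not_nonempty_iff_eq_empty] at h
    subst h
    rw [AffineSubspace.span_empty] at hspan
    have : (0 : Fin (d+1) → ℝ) ∈ (⊥ : AffineSubspace ℝ (Fin (d+1) → ℝ)) := by rw [hspan]; trivial
    exact this
  have claim : ∀ k : ℕ, k ≤ d + 1 →
      ∃ (φ : (Fin (d+1) → ℝ) →ₗ[ℝ] ℝ) (r : ℝ) (S : Set (Fin (d+1) → ℝ)),
        ¬(φ = 0 ∧ r = 0) ∧ (∀ x ∈ C, 0 ≤ φ x + r) ∧ S ⊆ C ∧ S.ncard = k ∧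
        ∀ x ∈ S, φ x + r = 0 := by
    intro k
    induction k with
    | zero =>
      intro _
      obtain ⟨xm, _, hxm⟩ := Set.exists_min_image C (fun x => x 0) hC hCne
      refine ⟨LinearMap.proj 0, -(xm 0), ∅, ?_, ?_, ?_, ?_, ?_⟩
      · rintro ⟨h, -⟩
        have := congrFun (congrArg (fun f : (Fin (d+1) → ℝ) →ₗ[ℝ] ℝ => (f : ((Fin (d+1) → ℝ)) → ℝ)) h) (Pi.single 0 1)
        simp [LinearMap.proj_apply] at this
      · intro x hx
        have := hxm x hx
        simp only [LinearMap.proj_apply]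
        linarith
      · exact Set.empty_subset C
      · simp
      · simp
    | succ k ih =>
      intro hk
      obtain ⟨φ, r, S, hne0, hnn, hSC, hScard, hS0⟩ := ih (by omega)
      have hSfin : S.Finite := hC.subset hSC
      -- find c ∈ C with 0 < φ c + r
      obtain ⟨c, hcC, hcpos⟩ : ∃ c ∈ C, 0 < φ c + r := by
        by_contra h
        push_neg at h
        have : ∀ x ∈ C, φ x + r = 0 := fun x hx => le_antisymm (h x hx) (hnn x hx)
        exact hne0 (eq_zero_of_vanish hspan φ r this)
      set A := affineSpan ℝ (insert c S) with hA
      have hAne : A ≠ ⊤ := by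
        apply affineSpan_ne_top_of_ncard_le (hSfin.insert c)
        have := Set.ncard_insert_le c S
        omega
      obtain ⟨p, hpC, hpA⟩ : ∃ p ∈ C, p ∉ A := by
        by_contra h
        push_neg at h
        exact hAne (top_unique (hspan ▸ affineSpan_le.2 h))
      obtain ⟨ψ, u, hψA, hψp⟩ := exists_sep (Set.mem_insert c S) hpA
      -- WLOG negative at p
      obtain ⟨m, mu, hmA, hmp⟩ :
          ∃ (m : (Fin (d+1) → ℝ) →ₗ[ℝ] ℝ) (mu : ℝ), (∀ x ∈ A, m x + mu = 0) ∧ m p + mu < 0 := by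
        rcases (Ne.lt_or_gt hψp) with h | h
        · exact ⟨ψ, u, hψA, h⟩
        · refine ⟨-ψ, -u, fun x hx => ?_, by simp only [LinearMap.neg_apply]; linarith⟩
          have := hψA x hx
          simp only [LinearMap.neg_apply]
          linarith
      set Mneg := {x ∈ C | m x + mu < 0} with hMneg
      have hMfin : Mneg.Finite := hC.subset (Set.sep_subset _ _)
      have hMne : Mneg.Nonempty := ⟨p, hpC, hmp⟩
      obtain ⟨x₀, hx₀M, hx₀min⟩ := Set.exists_min_image Mneg (fun x => (φ x + r) / (-(m x + mu))) hMfin hMne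
      obtain ⟨hx₀C, hx₀neg⟩ := hx₀M
      set t := (φ x₀ + r) / (-(m x₀ + mu)) with htdef
      have ht0 : 0 ≤ t := div_nonneg (hnn x₀ hx₀C) (by linarith)
      refine ⟨φ + t • m, r + t * mu, insert x₀ S, ?_, ?_, ?_, ?_, ?_⟩
      · -- nonzero: value at c is positive
        have hcA : c ∈ A := subset_affineSpan ℝ _ (Set.mem_insert c S)
        have hc0 : m c + mu = 0 := hmA c hcA
        rintro ⟨h1, h2⟩
        have := congrFun (congrArg (fun f : (Fin (d+1) → ℝ) →ₗ[ℝ] ℝ => (f : ((Fin (d+1) → ℝ)) → ℝ)) h1) c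
        simp only [LinearMap.add_apply, LinearMap.smul_apply, smul_eq_mul, LinearMap.zero_apply] at this
        nlinarith
      · intro x hx
        simp only [LinearMap.add_apply, LinearMap.smul_apply, smul_eq_mul]
        rcases le_or_gt 0 (m x + mu) with h | h
        · have := hnn x hx
          nlinarith
        · have hxM : x ∈ Mneg := ⟨hx, h⟩
          have hmin := hx₀min x hxM
          have hpos : 0 < -(m x + mu) := by linarith
          have : t * (-(m x + mu)) ≤ φ x + r := by
            rw [← le_div_iff₀ hpos]
            exact hmin
          nlinarith
      · exact Set.insert_subset hx₀C hSC
      · rw [Set.ncard_insert_of_notMem ?_ hSfin, hScard]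
        intro hx₀S
        have : x₀ ∈ A := subset_affineSpan ℝ _ (Set.mem_insert_of_mem c hx₀S)
        have := hmA x₀ this
        linarith
      · intro x hx
        simp only [LinearMap.add_apply, LinearMap.smul_apply, smul_eq_mul]
        rcases Set.mem_insert_iff.1 hx with rfl | hxS
        · have hne : m x + mu ≠ 0 := ne_of_lt hx₀neg
          have key : t * (m x + mu) = -(φ x + r) := by
            rw [htdef]
            field_simp
          linarith
        · have h1 := hS0 x hxS
          have hxA : x ∈ A := subset_affineSpan ℝ _ (Set.mem_insert_of_mem c hxS)
          have h2 := hmA x hxA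
          nlinarith
  obtain ⟨φ, r, S, hne0, hnn, hSC, hScard, hS0⟩ := claim (d+1) le_rfl
  have hSne : S.Nonempty := by
    rw [← Set.ncard_pos (hC.subset hSC)] at *
    omega
  refine ⟨φ, r, ?_, hnn, ?_⟩
  · intro hφ
    subst hφ
    obtain ⟨s, hs⟩ := hSne
    have := hS0 s hs
    simp at this
    exact hne0 ⟨rfl, this⟩
  · calc d + 1 = S.ncard := hScard.symm
      _ ≤ {x ∈ C | φ x + r = 0}.ncard := by
          apply Set.ncard_le_ncard ?_ (hC.subset (Set.sep_subset _ _))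
          intro x hx
          exact ⟨hSC hx, hS0 x hx⟩


/-- Complete a nonzero linear functional to a linear automorphism whose last
coordinate is the functional. -/
lemma exists_equiv_last (m : ℕ) (L : (Fin (m+1) → ℝ) →ₗ[ℝ] ℝ) (hL : L ≠ 0) :
    ∃ E : (Fin (m+1) → ℝ) ≃ₗ[ℝ] (Fin (m+1) → ℝ), ∀ x, E x (Fin.last m) = L x := by
  classical
  obtain ⟨w₀, hw₀⟩ : ∃ w₀, L w₀ ≠ 0 := by
    by_contra h
    push_neg at h
    exact hL (LinearMap.ext fun x => by simp [h x])
  set w : Fin (m+1) → ℝ := (L w₀)⁻¹ • w₀ with hw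
  have hLw : L w = 1 := by
    rw [hw, map_smul, smul_eq_mul, inv_mul_cancel₀ hw₀]
  have hsurj : Function.Surjective L := by
    intro r
    exact ⟨r • w, by rw [map_smul, hLw, smul_eq_mul, mul_one]⟩
  have hK : Module.finrank ℝ (LinearMap.ker L) = m := by
    have h1 := LinearMap.finrank_range_add_finrank_ker L
    have h2 : LinearMap.range L = ⊤ := LinearMap.range_eq_top.2 hsurj
    rw [h2, finrank_top] at h1
    simp [Module.finrank_pi] at h1 ⊢
    omega
  set B : Module.Basis (Fin m) ℝ (LinearMap.ker L) := Module.finBasisOfFinrankEq ℝ _ hK with hB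
  set F : (Fin (m+1) → ℝ) →ₗ[ℝ] (Fin (m+1) → ℝ) :=
    (∑ i : Fin m, (LinearMap.proj (i.castSucc : Fin (m+1))).smulRight ((B i : Fin (m+1) → ℝ)))
      + (LinearMap.proj (Fin.last m)).smulRight w with hF
  have hFapp : ∀ y, F y = (∑ i : Fin m, y i.castSucc • (B i : Fin (m+1) → ℝ)) + y (Fin.last m) • w := by
    intro y
    simp [hF, LinearMap.sum_apply, LinearMap.smulRight_apply, LinearMap.proj_apply]
  have hLF : ∀ y, L (F y) = y (Fin.last m) := by
    intro y
    rw [hFapp, map_add, map_smul, hLw, map_sum]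
    have : ∀ i : Fin m, L (y i.castSucc • (B i : Fin (m+1) → ℝ)) = 0 := by
      intro i
      rw [map_smul, LinearMap.map_coe_ker, smul_zero]
    rw [Finset.sum_congr rfl (fun i _ => this i)]
    simp
  have hFinj : Function.Injective F := by
    rw [← LinearMap.ker_eq_bot, LinearMap.ker_eq_bot']
    intro y hy
    have hylast : y (Fin.last m) = 0 := by rw [← hLF y, hy, map_zero]
    have hsum : (∑ i : Fin m, y i.castSucc • B i : LinearMap.ker L) = 0 := by
      refine Subtype.ext ?_
      have h2 := hFapp y
      rw [hy, hylast] at h2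
      simp only [zero_smul, add_zero] at h2
      simp only [AddSubmonoidClass.coe_finset_sum, SetLike.val_smul, ZeroMemClass.coe_zero]
      exact h2.symm
    have hcoef : ∀ i : Fin m, y i.castSucc = 0 := by
      intro i
      have hli := B.linearIndependent
      rw [linearIndependent_iff'] at hli
      exact hli Finset.univ (fun i => y i.castSucc) hsum i (Finset.mem_univ i)
    funext j
    refine Fin.lastCases ?_ ?_ j
    · exact hylast
    · intro i; exact hcoef i
  have hFbij : Function.Bijective F := ⟨hFinj, LinearMap.injective_iff_surjective.1 hFinj⟩
  set Eq0 := LinearEquiv.ofBijective F hFbij with hEq0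
  refine ⟨Eq0.symm, ?_⟩
  intro x
  have h : F (Eq0.symm x) = x := Eq0.apply_symm_apply x
  conv_rhs => rw [← h]
  rw [hLF]

lemma exists_affequiv_last (m : ℕ) (φ : (Fin (m+1) → ℝ) →ₗ[ℝ] ℝ) (hφ : φ ≠ 0) (r : ℝ) :
    ∃ h : (Fin (m+1) → ℝ) ≃ᵃ[ℝ] (Fin (m+1) → ℝ), ∀ x, h x (Fin.last m) = φ x + r := by
  obtain ⟨E, hE⟩ := exists_equiv_last m φ hφ
  refine ⟨E.toAffineEquiv.trans (AffineEquiv.constVAdd ℝ _ (Pi.single (Fin.last m) r)), ?_⟩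
  intro x
  have : (E.toAffineEquiv.trans (AffineEquiv.constVAdd ℝ _ (Pi.single (Fin.last m) r))) x
      = Pi.single (Fin.last m) r + E x := rfl
  rw [this]
  simp [Pi.single_eq_same, hE]
  ring

/-- the linear "sandwich" map: act on first k coordinates, keep last -/
noncomputable def sandLin (k : ℕ) (g : (Fin k → ℝ) →ₗ[ℝ] (Fin k → ℝ)) :
    (Fin (k+1) → ℝ) →ₗ[ℝ] (Fin (k+1) → ℝ) where
  toFun := fun y => Fin.snoc (g (fun i => y i.castSucc)) (y (Fin.last k))
  map_add' := by
    intro y z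
    have hg : (fun i : Fin k => (y+z) i.castSucc) = (fun i => y i.castSucc) + (fun i => z i.castSucc) := rfl
    funext j
    refine Fin.lastCases ?_ ?_ j
    · simp [Fin.snoc_last]
    · intro i
      simp only [Pi.add_apply, Fin.snoc_castSucc]
      rw [show (fun i : Fin k => y i.castSucc + z i.castSucc) = (fun i => y i.castSucc) + (fun i => z i.castSucc) from rfl, map_add]
      rfl
  map_smul' := by
    intro c y
    have hg : (fun i : Fin k => (c • y) i.castSucc) = c • (fun i => y i.castSucc) := rfl
    funext j
    refine Fin.lastCases ?_ ?_ j
    · simp [Fin.snoc_last]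
    · intro i
      simp only [Pi.smul_apply, Fin.snoc_castSucc, RingHom.id_apply]
      rw [show (fun i : Fin k => c • y i.castSucc) = c • (fun i => y i.castSucc) from rfl, map_smul]
      rfl

lemma sandLin_apply (k : ℕ) (g : (Fin k → ℝ) →ₗ[ℝ] (Fin k → ℝ)) (y : Fin (k+1) → ℝ) :
    sandLin k g y = Fin.snoc (g (fun i => y i.castSucc)) (y (Fin.last k)) := rfl

lemma exists_sandwich (k : ℕ) (g : (Fin k → ℝ) ≃ᵃ[ℝ] (Fin k → ℝ)) :
    ∃ q : (Fin (k+1) → ℝ) ≃ᵃ[ℝ] (Fin (k+1) → ℝ),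
      ∀ y, q y = Fin.snoc (g (fun i => y i.castSucc)) (y (Fin.last k)) := by
  have hcomp : ∀ (a b : (Fin k → ℝ) →ₗ[ℝ] (Fin k → ℝ)) (y : Fin (k+1) → ℝ),
      sandLin k a (sandLin k b y) = sandLin k (a ∘ₗ b) y := by
    intro a b y
    rw [sandLin_apply, sandLin_apply, sandLin_apply]
    have h1 : (fun i : Fin k => (Fin.snoc (b fun i => y i.castSucc) (y (Fin.last k)) : Fin (k+1) → ℝ) i.castSucc)
        = b (fun i => y i.castSucc) := by
      funext i; rw [Fin.snoc_castSucc]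
    rw [h1, Fin.snoc_last]
    rfl
  have hid : ∀ y : Fin (k+1) → ℝ, sandLin k (LinearMap.id) y = y := by
    intro y
    rw [sandLin_apply]
    funext j
    refine Fin.lastCases ?_ ?_ j
    · rw [Fin.snoc_last]
    · intro i; rw [Fin.snoc_castSucc]; rfl
  set E := g.linear with hEdef
  have hcan : ∀ (a b : (Fin k → ℝ) ≃ₗ[ℝ] (Fin k → ℝ)), (∀ v, a (b v) = v) →
      ∀ (y : Fin (k+1) → ℝ), sandLin k a.toLinearMap (sandLin k b.toLinearMap y) = y := by
    intro a b hab y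
    rw [hcomp]
    funext j
    refine Fin.lastCases ?_ ?_ j
    · rw [sandLin_apply, Fin.snoc_last]
    · intro i
      rw [sandLin_apply, Fin.snoc_castSucc]
      have h5 : (a.toLinearMap ∘ₗ b.toLinearMap) (fun i => y i.castSucc) = fun i => y i.castSucc := by
        simp only [LinearMap.comp_apply, LinearEquiv.coe_coe]
        exact hab _
      rw [h5]
  set SL : (Fin (k+1) → ℝ) ≃ₗ[ℝ] (Fin (k+1) → ℝ) :=
    LinearEquiv.ofLinear (sandLin k E.toLinearMap) (sandLin k E.symm.toLinearMap)
      (LinearMap.ext fun y => hcan E E.symm (fun v => E.apply_symm_apply v) y)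
      (LinearMap.ext fun y => hcan E.symm E (fun v => E.symm_apply_apply v) y) with hSL
  refine ⟨SL.toAffineEquiv.trans (AffineEquiv.constVAdd ℝ _ (Fin.snoc (g 0) (0:ℝ))), ?_⟩
  intro y
  have h1 : (SL.toAffineEquiv.trans (AffineEquiv.constVAdd ℝ _ (Fin.snoc (g 0) (0:ℝ)))) y
      = Fin.snoc (g 0) (0:ℝ) + SL y := rfl
  rw [h1]
  have h2 : SL y = Fin.snoc (E (fun i => y i.castSucc)) (y (Fin.last k)) := rfl
  rw [h2]
  have hdec : g (fun i => y i.castSucc) = E (fun i => y i.castSucc) + g 0 := by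
    have := AffineMap.decomp (g.toAffineMap : (Fin k → ℝ) →ᵃ[ℝ] (Fin k → ℝ))
    have h3 := congrFun this (fun i => y i.castSucc)
    simpa using h3
  funext j
  refine Fin.lastCases ?_ ?_ j
  · simp [Fin.snoc_last]
  · intro i
    simp [Fin.snoc_castSucc, hdec]
    ring

lemma Tset_exists_zero : ∀ (n : ℕ) (z : Fin n → ℝ), z ∈ Tset n → ∃ j : Fin n, z j = 0 := by
  intro n
  induction n with
  | zero => intro z hz; exact absurd hz (fun h => h)
  | succ n ih =>
    intro z hz
    rcases hz with h | ⟨h1, _⟩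
    · exact ⟨Fin.last n, h⟩
    · obtain ⟨j, hj⟩ := ih _ h1
      exact ⟨j.castSucc, hj⟩

lemma combine (n : ℕ) (C : Set (Fin (n+2) → ℝ)) (h : (Fin (n+2) → ℝ) ≃ᵃ[ℝ] (Fin (n+2) → ℝ))
    (hnn : ∀ x ∈ C, 0 ≤ h x (Fin.last (n+1)))
    (hts : IsTShaped n ((fun x => fun i : Fin (n+1) => h x i.castSucc) ''
      {x ∈ C | h x (Fin.last (n+1)) ≠ 0})) :
    IsTShaped (n+1) C := by
  obtain ⟨f', hf'⟩ := hts
  obtain ⟨q, hq⟩ := exists_sandwich (n+1) f'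
  refine ⟨h.trans q, ?_⟩
  intro x hx
  have htr : ∀ j, (h.trans q) x j = q (h x) j := fun j => rfl
  show _ ∨ _
  have hlast : (fun i : Fin (n+1) => (h.trans q) x i.succ) (Fin.last n) = h x (Fin.last (n+1)) := by
    simp only [htr, Fin.succ_last, hq, Fin.snoc_last]
  by_cases h0 : h x (Fin.last (n+1)) = 0
  · left
    rw [hlast]
    exact h0
  · right
    refine ⟨?_, by rw [hlast]; exact hnn x hx⟩
    have hmem := hf' (fun i => h x i.castSucc) ⟨x, ⟨hx, h0⟩, rfl⟩
    have heq : (fun i : Fin n => (fun i : Fin (n+1) => (h.trans q) x i.succ) i.castSucc)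
        = fun i : Fin n => f' (fun i => h x i.castSucc) i.succ := by
      funext i
      simp only [htr]
      rw [Fin.succ_castSucc, hq, Fin.snoc_castSucc]
    rw [heq]
    exact hmem


lemma tri_succ (n : ℕ) : (n+2)*(n+3)/2 = (n+1)*(n+2)/2 + (n+2) := by
  obtain ⟨t, ht⟩ : 2 ∣ (n+1)*(n+2) := (Nat.even_mul_succ_self (n+1)).two_dvd
  have h3 : (n+2)*(n+3) = (n+1)*(n+2) + 2*(n+2) := by ring
  omega

lemma isTShaped_of_small : ∀ n : ℕ, ∀ C : Set (Fin (n+1) → ℝ), C.Finite →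
    C.ncard < (n+1)*(n+2)/2 → IsTShaped n C := by
  intro n
  induction n with
  | zero =>
    intro C hfin hcard
    have h1 : C.ncard = 0 := by norm_num at hcard; omega
    have h2 : C = ∅ := (Set.ncard_eq_zero hfin).1 h1
    subst h2
    exact ⟨AffineEquiv.refl ℝ _, fun x hx => absurd hx (Set.notMem_empty x)⟩
  | succ n ih =>
    intro C hfin hcard
    by_cases hspan : affineSpan ℝ C = ⊤
    · obtain ⟨φ, r, hφ, hnn, hZ⟩ := facet hfin hspan
      obtain ⟨h, hh⟩ := exists_affequiv_last (n+1) φ hφ r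
      set Z := {x ∈ C | φ x + r = 0} with hZdef
      set Cp := {x ∈ C | h x (Fin.last (n+1)) ≠ 0} with hCp
      have hCpsub : Cp ⊆ C \ Z := by
        rintro x ⟨hx1, hx2⟩
        exact ⟨hx1, fun hxZ => hx2 (by rw [hh]; exact hxZ.2)⟩
      have hCpfin : Cp.Finite := hfin.subset (Set.sep_subset _ _)
      have hcardCp : Cp.ncard < (n+1)*(n+2)/2 := by
        have h1 : (C \ Z).ncard + Z.ncard = C.ncard :=
          Set.ncard_diff_add_ncard_of_subset (Set.sep_subset _ _) hfin
        have h2 : Cp.ncard ≤ (C \ Z).ncard := Set.ncard_le_ncard hCpsub hfin.diff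
        have h3 := tri_succ n
        have h4 : (n + 1 + 1) * (n + 1 + 2) = (n+2)*(n+3) := by ring
        rw [h4] at hcard
        omega
      set D := (fun x => fun i : Fin (n+1) => h x i.castSucc) '' Cp with hD
      have hDfin : D.Finite := hCpfin.image _
      have hDcard : D.ncard < (n+1)*(n+2)/2 :=
        lt_of_le_of_lt (Set.ncard_image_le hCpfin) hcardCp
      exact combine n C h (fun x hx => by rw [hh]; exact hnn x hx) (ih D hDfin hDcard)
    · obtain ⟨ψ, u, hψ, hψu⟩ :
          ∃ (ψ : (Fin (n+2) → ℝ) →ₗ[ℝ] ℝ) (u : ℝ), ψ ≠ 0 ∧ ∀ x ∈ C, ψ x + u = 0 := by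
        rcases Set.eq_empty_or_nonempty C with rfl | ⟨c, hc⟩
        · refine ⟨LinearMap.proj 0, 0, ?_, by simp⟩
          intro h0
          have := congrFun (congrArg (fun f : (Fin (n+2) → ℝ) →ₗ[ℝ] ℝ => (f : ((Fin (n+2) → ℝ)) → ℝ)) h0) (Pi.single 0 1)
          simp [LinearMap.proj_apply] at this
        · obtain ⟨p, hp⟩ : ∃ p, p ∉ affineSpan ℝ C := by
            by_contra h; push_neg at h
            exact hspan (top_unique fun x _ => h x)
          obtain ⟨ψ, u, h1, h2⟩ := exists_sep hc hp
          refine ⟨ψ, u, ?_, fun x hx => h1 x (subset_affineSpan ℝ C hx)⟩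
          intro h0
          subst h0
          have hcu := h1 c (subset_affineSpan ℝ C hc)
          simp only [LinearMap.zero_apply, zero_add] at hcu h2
          exact h2 hcu
      obtain ⟨h, hh⟩ := exists_affequiv_last (n+1) ψ hψ u
      apply combine n C h (fun x hx => by rw [hh, hψu x hx])
      have hempty : {x ∈ C | h x (Fin.last (n+1)) ≠ 0} = ∅ := by
        ext x
        simp only [Set.mem_setOf_eq, Set.mem_empty_iff_false, iff_false, not_and]
        intro hx
        rw [hh]
        simpa using hψu x hx
      rw [hempty, Set.image_empty]
      exact ⟨AffineEquiv.refl ℝ _, fun x hx => absurd hx (Set.notMem_empty x)⟩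


lemma exists_not_tshaped (n : ℕ) :
    ∃ C : Set (Fin (n+1) → ℝ), C.encard = ((n*(n+1)+1 : ℕ) : ℕ∞) ∧ ¬ IsTShaped n C := by
  classical
  set N := n*(n+1)+1 with hN
  set u : Fin N → (Fin (n+1) → ℝ) := fun k => fun i => ((k : ℕ) : ℝ)^(i.val+1) with hu
  have huinj : Function.Injective u := by
    intro a b hab
    have h1 := congrFun hab 0
    simp only [hu, pow_one] at h1
    have h0 : (0 : Fin (n+1)).val + 1 = 1 := rfl
    have : ((a : ℕ) : ℝ) = ((b : ℕ) : ℝ) := by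
      simpa [h0] using h1
    exact Fin.ext (Nat.cast_injective this)
  refine ⟨Set.range u, ?_, ?_⟩
  · rw [← Set.image_univ, huinj.encard_image Set.univ, Set.encard_univ]
    simp
  · rintro ⟨f, hf⟩
    -- each point lands in some coordinate hyperplane
    have hex : ∀ k : Fin N, ∃ j : Fin n, f (u k) j.succ = 0 := by
      intro k
      obtain ⟨j, hj⟩ := Tset_exists_zero n _ (hf (u k) (Set.mem_range_self k))
      exact ⟨j, hj⟩
    choose c hc using hex
    obtain ⟨j, hj⟩ := Fintype.exists_lt_card_fiber_of_mul_lt_card c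
      (by simp only [Fintype.card_fin]; omega : Fintype.card (Fin n) * (n+1) < Fintype.card (Fin N))
    set F : Finset (Fin N) := Finset.univ.filter (fun k => c k = j) with hF
    -- the affine functional x ↦ f x j.succ
    set φ : (Fin (n+1) → ℝ) →ₗ[ℝ] ℝ := (LinearMap.proj j.succ).comp (f.linear : (Fin (n+1) → ℝ) →ₗ[ℝ] (Fin (n+1) → ℝ)) with hφ
    set r : ℝ := f 0 j.succ with hr
    have hfx : ∀ x, f x j.succ = φ x + r := by
      intro x
      have hdec := congrFun (AffineMap.decomp (f.toAffineMap : (Fin (n+1) → ℝ) →ᵃ[ℝ] (Fin (n+1) → ℝ))) x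
      have := congrFun hdec j.succ
      simpa [hφ, hr] using this
    set a : Fin (n+1) → ℝ := fun i => φ (fun j' => if i = j' then 1 else 0) with ha
    set p : Polynomial ℝ :=
      Polynomial.C r + ∑ i : Fin (n+1), Polynomial.C (a i) * Polynomial.X^(i.val+1) with hp
    have heval : ∀ t : ℝ, p.eval t = φ (fun i => t^(i.val+1)) + r := by
      intro t
      rw [LinearMap.pi_apply_eq_sum_univ φ (fun i => t^(i.val+1))]
      simp only [hp, Polynomial.eval_add, Polynomial.eval_C, Polynomial.eval_finset_sum,
        Polynomial.eval_mul, Polynomial.eval_pow, Polynomial.eval_X]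
      rw [add_comm]
      congr 1
      apply Finset.sum_congr rfl
      intro i _
      rw [smul_eq_mul, mul_comm]
    have hdeg : p.natDegree ≤ n + 1 := by
      refine le_trans (Polynomial.natDegree_add_le _ _) ?_
      rw [max_le_iff]
      constructor
      · simp
      · apply Polynomial.natDegree_sum_le_of_forall_le
        intro i _
        refine le_trans (Polynomial.natDegree_C_mul_le _ _) ?_
        rw [Polynomial.natDegree_X_pow]
        omega
    have hroots : ∀ k : {k : Fin N // k ∈ F}, p.eval (((k : Fin N) : ℕ) : ℝ) = 0 := by
      rintro ⟨k, hk⟩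
      rw [hF, Finset.mem_filter] at hk
      have hk2 : f (u k) j.succ = 0 := by rw [← hk.2]; exact hc k
      rw [hfx] at hk2
      rw [heval]
      exact hk2
    have hinj2 : Function.Injective (fun k : {k : Fin N // k ∈ F} => (((k : Fin N) : ℕ) : ℝ)) := by
      intro a' b' hab
      simp only at hab
      exact Subtype.ext (Fin.ext (Nat.cast_injective hab))
    have hcard : p.natDegree < Fintype.card {k : Fin N // k ∈ F} := by
      rw [Fintype.card_coe]
      omega
    have hp0 : p = 0 := Polynomial.eq_zero_of_natDegree_lt_card_of_eval_eq_zero p hinj2 hroots hcard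
    -- extract coefficients
    have hr0 : r = 0 := by
      have := congrArg (fun q : Polynomial ℝ => q.coeff 0) hp0
      simp only [hp, Polynomial.coeff_add, Polynomial.coeff_C, Polynomial.finset_sum_coeff,
        Polynomial.coeff_C_mul, Polynomial.coeff_X_pow, Polynomial.coeff_zero] at this
      simpa using this
    have ha0 : ∀ i : Fin (n+1), a i = 0 := by
      intro i
      have := congrArg (fun q : Polynomial ℝ => q.coeff (i.val+1)) hp0
      simp only [hp, Polynomial.coeff_add, Polynomial.coeff_C, Polynomial.finset_sum_coeff,
        Polynomial.coeff_C_mul, Polynomial.coeff_X_pow, Polynomial.coeff_zero] at this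
      have hsum : ∀ i' : Fin (n+1),
          (a i') * (if i.val + 1 = i'.val + 1 then (1:ℝ) else 0)
          = if i' = i then a i' else 0 := by
        intro i'
        by_cases h : i' = i
        · subst h; simp
        · have : ¬(i.val + 1 = i'.val + 1) := by
            intro hh
            exact h (Fin.ext (by omega))
          simp [h, this]
          intro hh
          exact absurd (Fin.ext hh).symm h
      rw [Finset.sum_congr rfl (fun i' _ => hsum i')] at this
      rw [Finset.sum_ite_eq' Finset.univ i a] at this
      simpa using this
    have hφ0 : φ = 0 := by
      apply LinearMap.ext
      intro x
      rw [LinearMap.pi_apply_eq_sum_univ φ x]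
      simp only [LinearMap.zero_apply]
      apply Finset.sum_eq_zero
      intro i _
      rw [show φ (fun j' => if i = j' then 1 else 0) = a i from rfl, ha0 i, smul_zero]
    -- contradiction with surjectivity
    have hconst : ∀ x, f x j.succ = 0 := by
      intro x
      rw [hfx, hφ0, hr0]
      simp
    have := hconst (f.symm (Pi.single j.succ 1))
    rw [AffineEquiv.apply_symm_apply] at this
    simp [Pi.single_eq_same] at this


theorem tNum_ge_triangular' (n : ℕ) :
    (n + 1) * (n + 2) / 2 ≤ tNum n := by
  have hne : {m : ℕ | ∃ C : Set (Fin (n+1) → ℝ), C.encard = m ∧ ¬ IsTShaped n C}.Nonempty := by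
    obtain ⟨C, h1, h2⟩ := exists_not_tshaped n
    exact ⟨n*(n+1)+1, C, h1, h2⟩
  obtain ⟨C, hC1, hC2⟩ := Nat.sInf_mem hne
  have hfin : C.Finite := Set.finite_of_encard_eq_coe hC1
  have hncard : (C.ncard : ℕ∞) = C.encard := by
    rw [hfin.encard_eq_coe_toFinset_card, Set.ncard_eq_toFinset_card _ hfin]
  have hncard' : C.ncard = tNum n := by
    have h5 := hncard.trans hC1
    exact_mod_cast h5
  by_contra hlt
  push_neg at hlt
  exact hC2 (isTShaped_of_small n C hfin (by omega))

end TProof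


/-- For every `m = n + 1 ≥ 1`, `t(ℝᵐ) ≥ m (m + 1) / 2`. -/
theorem tNum_ge_triangular (n : ℕ) :
    (n + 1) * (n + 2) / 2 ≤ tNum n := by
  exact TProof.tNum_ge_triangular' n
end

section
/- For every k ≥ 2, the Euclidean space ℝ^k can be partitioned into k+1 Borel sets such that no unbounded subset of any piece is symmetric with respect to a point of ℝ^k; equivalently, there is a Borel (k+1)-coloring χ : ℝ^k → {0,…,k} with no unbounded monochromatic set S satisfying S = 2c − S for some c ∈ ℝ^k. -/
/-- For every `k ≥ 2` there is a Borel `(k+1)`-coloring of `ℝᵏ` such that every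
monochromatic subset that is symmetric with respect to some point `c ∈ ℝᵏ`
(i.e. `S = 2c - S`) is bounded. -/
theorem exists_borel_coloring_no_unbounded_symmetric (k : ℕ) (hk : 2 ≤ k) :
    ∃ χ : (Fin k → ℝ) → Fin (k + 1), Measurable χ ∧
      ∀ (S : Set (Fin k → ℝ)) (i : Fin (k + 1)) (c : Fin k → ℝ),
        (∀ x ∈ S, χ x = i) → S = (fun x => (2 : ℝ) • c - x) '' S →
          Bornology.IsBounded S := by
  classical
  -- the k+1 linear functionals: coordinates, plus minus their sum
  set L : Fin (k + 1) → (Fin k → ℝ) → ℝ :=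
    fun j x => if h : (j : ℕ) < k then x ⟨j, h⟩ else -(∑ t, x t) with hLdef
  have hLsum : ∀ x : Fin k → ℝ, ∑ j, L j x = 0 := by
    intro x
    rw [Fin.sum_univ_castSucc]
    have h1 : ∀ j : Fin k, L (Fin.castSucc j) x = x j := by
      intro j
      simp [hLdef, j.2]
    have h2 : L (Fin.last k) x = -(∑ t, x t) := by
      simp [hLdef]
    simp [h1, h2]
  have hLlin : ∀ (j : Fin (k + 1)) (c x : Fin k → ℝ),
      L j ((2 : ℝ) • c - x) = 2 * L j c - L j x := by
    intro j c x
    by_cases h : (j : ℕ) < k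
    · simp [hLdef, h, Pi.smul_apply, Pi.sub_apply]
      try ring
    · simp [hLdef, h, Pi.smul_apply, Pi.sub_apply, Finset.sum_sub_distrib,
        ← Finset.mul_sum]
      ring
  have hLmeas : ∀ j, Measurable (L j) := by
    intro j
    by_cases h : (j : ℕ) < k
    · simpa [hLdef, h] using measurable_pi_apply (⟨(j : ℕ), h⟩ : Fin k)
    · simp only [hLdef, h, dif_neg, not_false_iff]
      exact (Finset.measurable_sum Finset.univ fun t _ => measurable_pi_apply t).neg
  -- the argmax set
  set A : (Fin k → ℝ) → Finset (Fin (k + 1)) :=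
    fun x => Finset.univ.filter (fun i => ∀ j, L j x ≤ L i x) with hAdef
  have hA : ∀ x, (A x).Nonempty := by
    intro x
    obtain ⟨i, hi⟩ := Finite.exists_max (fun i : Fin (k + 1) => L i x)
    exact ⟨i, by simp [hAdef, hi]⟩
  set χ : (Fin k → ℝ) → Fin (k + 1) := fun x => (A x).min' (hA x) with hχdef
  have hmem : ∀ x j, L j x ≤ L (χ x) x := by
    intro x j
    have h1 : χ x ∈ Finset.univ.filter (fun i => ∀ j, L j x ≤ L i x) :=
      (A x).min'_mem (hA x)
    exact (Finset.mem_filter.mp h1).2 j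
  refine ⟨χ, ?_, ?_⟩
  · -- measurability
    apply measurable_to_countable'
    intro i
    have : χ ⁻¹' {i} =
        {x | ∀ j, L j x ≤ L i x} ∩ ⋂ (j : Fin (k + 1)) (_ : j < i),
          {x | ∀ t, L t x ≤ L j x}ᶜ := by
      ext x
      simp only [Set.mem_preimage, Set.mem_singleton_iff, Set.mem_inter_iff,
        Set.mem_setOf_eq, Set.mem_iInter, Set.mem_compl_iff]
      constructor
      · intro hx
        refine ⟨hx ▸ hmem x, ?_⟩
        intro j hj hPj
        have hjA : j ∈ A x := Finset.mem_filter.mpr ⟨Finset.mem_univ j, hPj⟩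
        have h' : χ x ≤ j := (A x).min'_le j hjA
        rw [hx] at h'
        exact absurd hj (not_lt.mpr h')
      · rintro ⟨hPi, hlt⟩
        have hiA : i ∈ A x := Finset.mem_filter.mpr ⟨Finset.mem_univ i, hPi⟩
        have h1 : χ x ≤ i := (A x).min'_le i hiA
        have h2 : ¬ χ x < i := by
          intro hc
          exact hlt (χ x) hc (hmem x)
        exact le_antisymm h1 (not_lt.mp h2)
    rw [this]
    refine MeasurableSet.inter ?_ ?_
    · have : {x | ∀ j, L j x ≤ L i x} = ⋂ j, {x | L j x ≤ L i x} := by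
        ext x; simp
      rw [this]
      exact MeasurableSet.iInter fun j =>
        measurableSet_le (hLmeas j) (hLmeas i)
    · refine MeasurableSet.iInter fun j => MeasurableSet.iInter fun _ => ?_
      have : {x | ∀ t, L t x ≤ L j x} = ⋂ t, {x | L t x ≤ L j x} := by
        ext x; simp
      rw [this]
      exact (MeasurableSet.iInter fun t =>
        measurableSet_le (hLmeas t) (hLmeas j)).compl
  · -- the symmetry property
    intro S i c hmono hsym
    -- S is closed under the point reflection
    have hrefl : ∀ x ∈ S, (2 : ℝ) • c - x ∈ S := by
      intro x hx
      rw [hsym] at hx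
      obtain ⟨y, hy, hyx⟩ := hx
      have : y = (2 : ℝ) • c - x := by
        simp only at hyx
        rw [← hyx]; abel
      rwa [← this]
    -- on S, L i is the max of all L j
    have hmax : ∀ x ∈ S, ∀ j, L j x ≤ L i x := by
      intro x hx j
      have := hmem x j
      rwa [hmono x hx] at this
    -- L i ≥ 0 on S
    have hpos : ∀ x ∈ S, 0 ≤ L i x := by
      intro x hx
      have hsumle : ∑ j, L j x ≤ Finset.univ.card • L i x :=
        Finset.sum_le_card_nsmul Finset.univ _ _ (fun j _ => hmax x hx j)
      rw [hLsum x, Finset.card_univ, Fintype.card_fin, nsmul_eq_mul] at hsumle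
      have hc : (0 : ℝ) < ((k + 1 : ℕ) : ℝ) := by positivity
      nlinarith [hsumle, hc]
    -- L i ≤ 2 L i c on S
    have hub : ∀ x ∈ S, L i x ≤ 2 * L i c := by
      intro x hx
      have := hpos _ (hrefl x hx)
      rw [hLlin i c x] at this
      linarith
    -- each L j is bounded on S
    have hbdd : ∀ x ∈ S, ∀ j, 2 * L j c - 2 * L i c ≤ L j x ∧ L j x ≤ 2 * L i c := by
      intro x hx j
      constructor
      · have h1 := hmax _ (hrefl x hx) j
        rw [hLlin j c x, hLlin i c x] at h1
        have h3 := hpos x hx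
        linarith
      · exact le_trans (hmax x hx j) (hub x hx)
    -- hence S is bounded
    set C : ℝ := 2 * |L i c| + 2 * ∑ j, |L j c| with hCdef
    have hC0 : 0 ≤ C := by
      have : (0 : ℝ) ≤ ∑ j, |L j c| :=
        Finset.sum_nonneg fun j _ => abs_nonneg _
      positivity
    have habs : ∀ x ∈ S, ∀ j, |L j x| ≤ C := by
      intro x hx j
      have hsumabs : |L j c| ≤ ∑ t, |L t c| :=
        Finset.single_le_sum (fun t _ => abs_nonneg (L t c)) (Finset.mem_univ j)
      have h1 := (hbdd x hx j).1
      have h2 := (hbdd x hx j).2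
      have h3 : |L i c| ≤ ∑ t, |L t c| :=
        Finset.single_le_sum (fun t _ => abs_nonneg (L t c)) (Finset.mem_univ i)
      rw [abs_le]
      constructor
      · have := neg_abs_le (L j c)
        have := neg_abs_le (L i c)
        have := le_abs_self (L i c)
        rw [hCdef]
        nlinarith [abs_nonneg (L j c), abs_nonneg (L i c)]
      · have := le_abs_self (L i c)
        rw [hCdef]
        nlinarith [abs_nonneg (L i c),
          Finset.sum_nonneg (fun t (_ : t ∈ Finset.univ) => abs_nonneg (L t c))]
    have hsub : S ⊆ Metric.closedBall (0 : Fin k → ℝ) C := by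
      intro x hx
      rw [Metric.mem_closedBall, dist_pi_le_iff hC0]
      intro t
      have ht : (t : ℕ) < k := t.2
      have := habs x hx ⟨(t : ℕ), Nat.lt_succ_of_lt ht⟩
      have hLt : L ⟨(t : ℕ), Nat.lt_succ_of_lt ht⟩ x = x t := by
        simp [hLdef, ht]
      rw [hLt] at this
      simpa [Real.dist_eq] using this
    exact Metric.isBounded_closedBall.subset hsub
end

section
/- Let X be a topological group, k ≥ 2, and C ⊆ X a subset that is not k-centerpole in X. Then C, viewed as a subset C × {0} of the product group X × ℝ, is not k-centerpole in X × ℝ. -/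
/-- A subset `B` of a topological additive group is totally bounded if every
neighborhood `U` of `0` admits finitely many translates covering `B`. -/
def IsTotBounded {G : Type*} [AddGroup G] [TopologicalSpace G] (B : Set G) : Prop :=
  ∀ U ∈ nhds (0 : G), ∃ F : Set G, F.Finite ∧ B ⊆ ⋃ x ∈ F, (fun u => x + u) '' U

/-- `C ⊆ G` is `k`-centerpole: every `k`-coloring of `G` admits an unbounded
monochromatic subset `S` symmetric with respect to some `c ∈ C`, in the sense
that `S - c = c - S` (written multiplicatively: `S·c⁻¹ = c·S⁻¹`). -/
def IsCenterpole {G : Type*} [AddGroup G] [TopologicalSpace G]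
    (k : ℕ) (C : Set G) : Prop :=
  ∀ χ : G → Fin k, ∃ c ∈ C, ∃ S : Set G,
    (∃ i : Fin k, ∀ x ∈ S, χ x = i) ∧ ¬ IsTotBounded S ∧
    (fun s => s + -c) '' S = (fun s => c + -s) '' S

/-- If `k ≥ 2` and `C ⊆ X` is not `k`-centerpole in `X`, then `C × {0}` is not
`k`-centerpole in `X × ℝ`. -/
theorem not_centerpole_prod_real {X : Type*} [AddGroup X] [TopologicalSpace X]
    [IsTopologicalAddGroup X] (k : ℕ) (hk : 2 ≤ k) (C : Set X)
    (hC : ¬ IsCenterpole k C) :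
    ¬ IsCenterpole k ((fun x => (x, (0 : ℝ))) '' C : Set (X × ℝ)) := by
  intro h
  apply hC
  intro χ
  set χ' : X × ℝ → Fin k := fun p =>
    if p.2 = 0 then χ p.1 else if p.2 < 0 then ⟨0, by omega⟩ else ⟨1, by omega⟩ with hχ'
  obtain ⟨c, hc, S, ⟨i, hmono⟩, hub, hsym⟩ := h χ'
  obtain ⟨c₀, hc₀, rfl⟩ := hc
  -- reflection stays in S
  have hrefl : ∀ s ∈ S, ((c₀, (0:ℝ)) + -s + (c₀, (0:ℝ))) ∈ S := by
    intro s hs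
    have h1 : (fun t => t + -(c₀, (0:ℝ))) s ∈ (fun t => t + -(c₀, (0:ℝ))) '' S :=
      Set.mem_image_of_mem _ hs
    rw [hsym] at h1
    obtain ⟨s', hs', he⟩ := h1
    dsimp only at he
    have : s' = (c₀, (0:ℝ)) + -s + (c₀, (0:ℝ)) := by
      have h2 : -s' = -(c₀, (0:ℝ)) + (s + -(c₀, (0:ℝ))) := by
        rw [← he]; exact (neg_add_cancel_left _ _).symm
      have h3 : s' = -(-(c₀, (0:ℝ)) + (s + -(c₀, (0:ℝ)))) := by
        rw [← h2, neg_neg]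
      rw [h3]
      simp [neg_add_rev, add_assoc]
    rwa [← this]
  -- all points of S have second coordinate 0
  have hzero : ∀ s ∈ S, s.2 = 0 := by
    intro s hs
    by_contra hne
    have hs' := hrefl s hs
    have e1 : χ' s = i := hmono s hs
    have e2 : χ' ((c₀, (0:ℝ)) + -s + (c₀, (0:ℝ))) = i := hmono _ hs'
    have h2 : ((c₀, (0:ℝ)) + -s + (c₀, (0:ℝ))).2 = -s.2 := by simp
    rcases lt_or_gt_of_ne hne with hlt | hgt
    · have v1 : χ' s = ⟨0, by omega⟩ := by
        simp [hχ', hne, hlt]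
      have v2 : χ' ((c₀, (0:ℝ)) + -s + (c₀, (0:ℝ))) = ⟨1, by omega⟩ := by
        have : (0:ℝ) < -s.2 := by linarith
        simp [hχ', h2, this.ne', not_lt.mpr this.le]
      rw [v1] at e1; rw [v2] at e2
      have : (⟨0, by omega⟩ : Fin k) = ⟨1, by omega⟩ := e1.trans e2.symm
      simp at this
    · have v1 : χ' s = ⟨1, by omega⟩ := by
        simp [hχ', hne, not_lt.mpr hgt.le]
      have v2 : χ' ((c₀, (0:ℝ)) + -s + (c₀, (0:ℝ))) = ⟨0, by omega⟩ := by
        have : -s.2 < 0 := by linarith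
        simp [hχ', h2, this.ne, this]
      rw [v1] at e1; rw [v2] at e2
      have : (⟨1, by omega⟩ : Fin k) = ⟨0, by omega⟩ := e1.trans e2.symm
      simp at this
  refine ⟨c₀, hc₀, {x | (x, (0:ℝ)) ∈ S}, ⟨i, ?_⟩, ?_, ?_⟩
  · intro x hx
    have := hmono (x, (0:ℝ)) hx
    simpa [hχ'] using this
  · -- unboundedness
    intro hT
    apply hub
    intro U hU
    rw [show ((0 : X × ℝ)) = ((0 : X), (0 : ℝ)) from rfl, mem_nhds_prod_iff] at hU
    obtain ⟨V, hV, W, hW, hVW⟩ := hU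
    obtain ⟨F, hF, hcov⟩ := hT V hV
    refine ⟨(fun x => (x, (0:ℝ))) '' F, hF.image _, ?_⟩
    intro s hs
    have h0 : s.2 = 0 := hzero s hs
    have hx : s.1 ∈ {x | (x, (0:ℝ)) ∈ S} := by
      show (s.1, (0:ℝ)) ∈ S
      rwa [← h0, Prod.mk.eta]
    obtain ⟨t, ht, hmem⟩ := Set.mem_iUnion₂.1 (hcov hx)
    obtain ⟨u, hu, he⟩ := hmem
    refine Set.mem_iUnion₂.2 ⟨(t, (0:ℝ)), Set.mem_image_of_mem _ ht, ?_⟩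
    refine ⟨(u, (0:ℝ)), hVW ⟨hu, mem_of_mem_nhds hW⟩, ?_⟩
    have : s = (s.1, (0:ℝ)) := by rw [← h0]
    rw [this, ← he]
    simp
  · -- symmetry of T
    ext z
    constructor
    · rintro ⟨x, hx, rfl⟩
      have hs' := hrefl (x, (0:ℝ)) hx
      have hmem : (c₀ + -x + c₀, (0:ℝ)) ∈ S := by
        convert hs' using 2 <;> simp
      refine ⟨c₀ + -x + c₀, hmem, ?_⟩
      simp [neg_add_rev, add_assoc]
    · rintro ⟨x, hx, rfl⟩
      have hs' := hrefl (x, (0:ℝ)) hx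
      have hmem : (c₀ + -x + c₀, (0:ℝ)) ∈ S := by
        convert hs' using 2 <;> simp
      refine ⟨c₀ + -x + c₀, hmem, ?_⟩
      simp [neg_add_rev, add_assoc]
end

section
/- Let C ⊆ ℤ^ω (the countable power of ℤ with the product topology) be a countable dense subset and let κ be a cardinal with ω ≤ κ < cov(M). Then for every Borel coloring χ : ℤ^ω → κ there exist a color i, a point c ∈ C, and a nonmeager (hence unbounded) set S ⊆ χ^{−1}(i) with S = 2c − S. -/
open Topology Set

namespace CenterpoleAux

/-! ### encoding/decoding machinery -/

noncomputable def eZ : ℕ → ℤ := fun n => (Denumerable.eqv ℤ).symm n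
noncomputable def dZ : ℤ → ℕ := fun z => Denumerable.eqv ℤ z
lemma dZ_eZ (n : ℕ) : dZ (eZ n) = n := (Denumerable.eqv ℤ).apply_symm_apply n
lemma eZ_dZ (z : ℤ) : eZ (dZ z) = z := (Denumerable.eqv ℤ).symm_apply_apply z

noncomputable def dg (x : ℝ) (j : ℕ) : ℤ := ⌊x * 2^(j+1)⌋ - 2*⌊x * 2^j⌋

noncomputable def dgm (m : ℤ) (k j : ℕ) : ℤ :=
  ⌊(m:ℝ)/2^(k-j-1)⌋ - 2*⌊(m:ℝ)/2^(k-j)⌋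

noncomputable def zp (y : ℕ → ℤ) : ℕ → ℕ
  | 0 => sInf {j | y j = 0}
  | n+1 => sInf {j | zp y n < j ∧ y j = 0}

noncomputable def dec (y : ℕ → ℤ) (n : ℕ) : ℤ :=
  eZ (if n = 0 then zp y 0 else zp y n - zp y (n-1) - 1)

def bv (b : Bool) : ℤ := if b then 1 else 0

noncomputable def EL (w : List ℤ) : List Bool :=
  w.flatMap (fun z => List.replicate (dZ z) true ++ [false])

lemma EL_append (u v : List ℤ) : EL (u ++ v) = EL u ++ EL v := by simp [EL]

lemma EL_single (z : ℤ) : EL [z] = List.replicate (dZ z) true ++ [false] := by simp [EL]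

def vB (s : List Bool) : ℤ := s.foldl (fun a b => 2*a + bv b) 0

lemma bv_mem (b : Bool) : bv b = 0 ∨ bv b = 1 := by cases b <;> simp [bv]

lemma vB_append (s : List Bool) (b : Bool) : vB (s ++ [b]) = 2 * vB s + bv b := by
  simp [vB, List.foldl_append]

noncomputable def fR (x : ℝ) : ℕ → ℤ := dec (dg x)

def cyl (w : List ℤ) : Set (ℕ → ℤ) := {y | ∀ n, n < w.length → y n = w.getD n 0}

noncomputable def sB (m : ℤ) (k : ℕ) : List Bool :=
  (List.range k).map (fun j => decide (dgm m k j = 1))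

/-! ### floor lemmas -/

lemma floorScale (m : ℤ) (c : ℕ) (t : ℝ) (h1 : (m:ℝ)/2^c ≤ t)
    (h2 : t < ((m:ℝ)+1)/2^c) : ⌊t⌋ = ⌊(m:ℝ)/2^c⌋ := by
  have hpow : (0:ℝ) < 2^c := by positivity
  refine le_antisymm ?_ (Int.floor_le_floor h1)
  have h3 : (m:ℝ) < (((⌊(m:ℝ)/2^c⌋ + 1) * 2^c : ℤ) : ℝ) := by
    push_cast
    have := Int.lt_floor_add_one ((m:ℝ)/2^c)
    rw [div_lt_iff₀ hpow] at this
    linarith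
  have h4 : m + 1 ≤ (⌊(m:ℝ)/2^c⌋ + 1) * 2^c := by exact_mod_cast h3
  have key : t < ((⌊(m:ℝ)/2^c⌋ : ℝ) + 1) := by
    calc t < ((m:ℝ)+1)/2^c := h2
    _ ≤ ((⌊(m:ℝ)/2^c⌋ : ℝ) + 1) := by
        rw [div_le_iff₀ hpow]
        exact_mod_cast h4
  have := Int.floor_lt.2 (by exact_mod_cast key : t < ((⌊(m:ℝ)/2^c⌋ + 1 : ℤ) : ℝ))
  omega

lemma dg_of_mem_Ioo {m : ℤ} {k : ℕ} {x : ℝ}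
    (hx : x ∈ Set.Ioo ((m:ℝ)/2^k) (((m:ℝ)+1)/2^k)) {j : ℕ} (hj : j < k) :
    dg x j = dgm m k j := by
  obtain ⟨hx1, hx2⟩ := hx
  have key : ∀ i : ℕ, i ≤ k → ⌊x * 2^i⌋ = ⌊(m:ℝ)/2^(k-i)⌋ := by
    intro i hi
    have hpow : (0:ℝ) < 2^i := by positivity
    have hsplit : (2:ℝ)^k = 2^(k-i) * 2^i := by
      rw [← pow_add]; congr 1; omega
    apply floorScale
    · rw [div_le_iff₀ (by positivity : (0:ℝ) < 2^(k-i))]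
      calc (m:ℝ) = ((m:ℝ)/2^k) * 2^k := by field_simp
      _ ≤ x * 2^k := by
          apply mul_le_mul_of_nonneg_right (le_of_lt hx1) (by positivity)
      _ = x * 2^i * 2^(k-i) := by rw [hsplit]; ring
    · rw [lt_div_iff₀ (by positivity : (0:ℝ) < 2^(k-i))]
      calc x * 2^i * 2^(k-i) = x * 2^k := by rw [hsplit]; ring
      _ < (((m:ℝ)+1)/2^k) * 2^k := by
          apply mul_lt_mul_of_pos_right hx2 (by positivity)
      _ = (m:ℝ)+1 := by field_simp
  rw [dg, dgm, key (j+1) hj, key j (le_of_lt hj), Nat.sub_sub]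

/-! ### decoding a prefix -/

theorem decode_prefix : ∀ (w : List ℤ) (y : ℕ → ℤ),
    (∀ j, j < (EL w).length → y j = bv ((EL w).getD j false)) →
    (∀ n, n < w.length → zp y n + 1 = (EL (w.take (n+1))).length) ∧
    (∀ n, n < w.length → dec y n = w.getD n 0) := by
  intro w
  induction w using List.reverseRecOn with
  | nil => intro y _; constructor <;> intro n hn <;> simp at hn
  | append_singleton u z IH =>
    intro y hy
    have hEL : EL (u ++ [z]) = EL u ++ (List.replicate (dZ z) true ++ [false]) := by
      rw [EL_append, EL_single]
    set L := (EL u).length with hL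
    set D := dZ z with hD
    have hlen : (EL (u ++ [z])).length = L + D + 1 := by
      rw [hEL]; simp [hL]; omega
    have hy1 : ∀ j, L ≤ j → j < L + D → y j = 1 := by
      intro j h1 h2
      have hjlen : j < (EL (u ++ [z])).length := by omega
      rw [hy j hjlen, hEL, List.getD_append_right _ _ _ _ h1,
        List.getD_append _ _ _ _ (by simp; omega),
        List.getD_eq_getElem _ _ (by simp; omega)]
      simp [bv]
    have hy0 : y (L + D) = 0 := by
      have hjlen : L + D < (EL (u ++ [z])).length := by omega
      rw [hy (L+D) hjlen, hEL, List.getD_append_right _ _ _ _ (by omega),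
        List.getD_append_right _ _ _ _ (by simp; omega)]
      simp [bv]
    have hyu : ∀ j, j < (EL u).length → y j = bv ((EL u).getD j false) := by
      intro j hj
      rw [hy j (by rw [hlen]; omega), hEL, List.getD_append _ _ _ _ hj]
    obtain ⟨IH1, IH2⟩ := IH y hyu
    have htake : ∀ n, n < u.length → (u ++ [z]).take (n+1) = u.take (n+1) := by
      intro n hn
      rw [List.take_append_of_le_length (by omega)]
    have hzp_new : zp y u.length = L + D := by
      rcases Nat.eq_zero_or_pos u.length with h0 | hpos
      · have hu : u = [] := List.length_eq_zero_iff.mp h0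
        subst hu
        have hL0 : L = 0 := by simp [hL, EL]
        show sInf {j | y j = 0} = L + D
        have hmem : L + D ∈ {j | y j = 0} := hy0
        refine le_antisymm (Nat.sInf_le hmem) ?_
        by_contra hlt
        push_neg at hlt
        have hmem2 := Nat.sInf_mem ⟨_, hmem⟩
        have : y (sInf {j | y j = 0}) = 1 := hy1 _ (by omega) hlt
        rw [Set.mem_setOf_eq] at hmem2
        omega
      · obtain ⟨n', hn'⟩ : ∃ n', u.length = n' + 1 := ⟨u.length - 1, by omega⟩
        rw [hn']
        show sInf {j | zp y n' < j ∧ y j = 0} = L + D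
        have hz' : zp y n' + 1 = L := by
          have := IH1 n' (by omega)
          rwa [(by omega : n' + 1 = u.length), List.take_length] at this
        have hmem : L + D ∈ {j | zp y n' < j ∧ y j = 0} := ⟨by omega, hy0⟩
        refine le_antisymm (Nat.sInf_le hmem) ?_
        by_contra hlt
        push_neg at hlt
        have hmem2 := Nat.sInf_mem ⟨_, hmem⟩
        rw [Set.mem_setOf_eq] at hmem2
        have : y (sInf {j | zp y n' < j ∧ y j = 0}) = 1 := hy1 _ (by omega) hlt
        omega
    have hzp_prev : u.length ≠ 0 → zp y (u.length - 1) + 1 = L := by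
      intro hpos
      have := IH1 (u.length - 1) (by omega)
      rwa [(by omega : u.length - 1 + 1 = u.length), List.take_length] at this
    constructor
    · intro n hn
      rw [List.length_append, List.length_singleton] at hn
      rcases Nat.lt_or_ge n u.length with h | h
      · rw [htake n h]; exact IH1 n h
      · have hn' : n = u.length := by omega
        subst hn'
        rw [List.take_of_length_le (by simp), hzp_new, hlen]
    · intro n hn
      rw [List.length_append, List.length_singleton] at hn
      rcases Nat.lt_or_ge n u.length with h | h
      · rw [List.getD_append _ _ _ _ h]; exact IH2 n h
      · have hn' : n = u.length := by omega
        subst hn'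
        have hget : (u ++ [z]).getD u.length 0 = z := by
          rw [List.getD_append_right _ _ _ _ (le_refl _)]
          simp
        rw [hget, dec]
        rcases Nat.eq_zero_or_pos u.length with h0 | hpos
        · rw [if_pos h0, (h0 ▸ hzp_new : zp y 0 = L + D)]
          have hu : u = [] := List.length_eq_zero_iff.mp h0
          have hL0 : L = 0 := by subst hu; simp [hL, EL]
          rw [hL0, Nat.zero_add, hD, eZ_dZ]
        · rw [if_neg (by omega)]
          have h1 : zp y (u.length - 1) + 1 = L := hzp_prev (by omega)
          have h2 : zp y u.length - zp y (u.length - 1) - 1 = D := by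
            rw [hzp_new]; omega
          rw [h2, hD, eZ_dZ]

/-! ### base-two value of a bit list -/

lemma halfFloor (v : ℤ) (b : Bool) (c : ℕ) (hc : 1 ≤ c) :
    ⌊((2*v + bv b : ℤ) : ℝ)/2^c⌋ = ⌊(v:ℝ)/2^(c-1)⌋ := by
  have hb := bv_mem b
  have hpow : (0:ℝ) < 2^c := by positivity
  have hpow' : (0:ℝ) < 2^(c-1) := by positivity
  have hsplit : (2:ℝ)^c = 2^(c-1) * 2 := by
    rw [← pow_succ]; congr 1; omega
  apply floorScale
  · rw [div_le_div_iff₀ hpow' hpow, hsplit]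
    push_cast
    rcases hb with h | h <;> rw [h] <;> push_cast <;> nlinarith [hpow']
  · rw [div_lt_div_iff₀ hpow hpow', hsplit]
    push_cast
    rcases hb with h | h <;> rw [h] <;> push_cast <;> nlinarith [hpow']

theorem code_spec : ∀ s : List Bool,
    0 ≤ vB s ∧ vB s < 2^s.length ∧
    ∀ j, j < s.length → dgm (vB s) s.length j = bv (s.getD j false) := by
  intro s
  induction s using List.reverseRecOn with
  | nil => refine ⟨le_refl _, by norm_num [vB], ?_⟩; intro j hj; simp at hj
  | append_singleton s b IH =>
    obtain ⟨IH0, IH1, IH2⟩ := IH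
    have hb := bv_mem b
    have hv : vB (s ++ [b]) = 2 * vB s + bv b := vB_append s b
    have hlen : (s ++ [b]).length = s.length + 1 := by simp
    refine ⟨by omega, ?_, ?_⟩
    · rw [hv, hlen, pow_succ]; omega
    · intro j hj
      rw [hlen] at hj
      rcases Nat.lt_or_ge j s.length with h | h
      · have e1 : s.length + 1 - j - 1 = (s.length - j - 1) + 1 := by omega
        have e2 : s.length + 1 - j = (s.length - j) + 1 := by omega
        rw [dgm, hv, hlen, e1, e2, halfFloor _ _ _ (by omega),
          halfFloor _ _ _ (by omega)]
        simp only [Nat.add_sub_cancel]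
        rw [List.getD_append _ _ _ _ h]
        exact IH2 j h
      · have hj' : j = s.length := by omega
        subst hj'
        rw [dgm, hv, hlen]
        have e1 : s.length + 1 - s.length - 1 = 0 := by omega
        have e2 : s.length + 1 - s.length = 1 := by omega
        rw [e1, e2, halfFloor _ _ _ (le_refl 1)]
        simp only [pow_zero, div_one, Nat.sub_self, pow_zero, div_one]
        rw [Int.floor_intCast, Int.floor_intCast, List.getD_append_right _ _ _ _ (le_refl _)]
        simp

/-! ### digits of concatenated stems -/

lemma F1 (m v : ℤ) (t : ℕ) (hv0 : 0 ≤ v) (hvt : v < 2^t) (c : ℕ) :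
    ⌊((m*2^t + v : ℤ):ℝ)/2^(t+c)⌋ = ⌊(m:ℝ)/2^c⌋ := by
  have hc : (0:ℝ) < 2^c := by positivity
  have htc : (0:ℝ) < 2^(t+c) := by positivity
  have hsplit : (2:ℝ)^(t+c) = 2^t * 2^c := by rw [pow_add]
  have hv0' : (0:ℝ) ≤ (v:ℝ) := by exact_mod_cast hv0
  have hvt' : (v:ℝ) < 2^t := by exact_mod_cast hvt
  apply floorScale
  · rw [div_le_div_iff₀ hc htc, hsplit]
    push_cast
    nlinarith
  · rw [div_lt_div_iff₀ htc hc, hsplit]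
    push_cast
    nlinarith

lemma F2 (m v : ℤ) (t : ℕ) (c : ℕ) (hct : c ≤ t) :
    ⌊((m*2^t + v : ℤ):ℝ)/2^c⌋ = m*2^(t-c) + ⌊(v:ℝ)/2^c⌋ := by
  have hc : (0:ℝ) < 2^c := by positivity
  have heq : ((m*2^t + v : ℤ):ℝ)/2^c = ((m*2^(t-c) : ℤ):ℝ) + (v:ℝ)/2^c := by
    have hsplit : (2:ℝ)^t = 2^(t-c) * 2^c := by
      rw [← pow_add]; congr 1; omega
    push_cast
    field_simp
    rw [hsplit]; ring
  rw [heq, Int.floor_intCast_add]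

lemma dgm_append (m v : ℤ) (k t : ℕ) (hv0 : 0 ≤ v) (hvt : v < 2^t) :
    (∀ j, j < k → dgm (m*2^t + v) (k+t) j = dgm m k j) ∧
    (∀ j, k ≤ j → j < k+t → dgm (m*2^t+v) (k+t) j = dgm v t (j-k)) := by
  constructor
  · intro j hj
    have e1 : k+t-j-1 = t+(k-j-1) := by omega
    have e2 : k+t-j = t+(k-j) := by omega
    rw [dgm, e1, e2, F1 m v t hv0 hvt, F1 m v t hv0 hvt, dgm]
  · intro j hj1 hj2
    have e3 : t-(j-k) = k+t-j := by omega
    rw [dgm, dgm, e3, F2 m v t (k+t-j-1) (by omega), F2 m v t (k+t-j) (by omega)]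
    have hpow : (2:ℤ)^(t-(k+t-j-1)) = 2*2^(t-(k+t-j)) := by
      rw [(by omega : t-(k+t-j-1) = (t-(k+t-j))+1), pow_succ]; ring
    rw [hpow]
    ring

/-! ### parsing a bit string ending in zero -/

theorem parse : ∀ (s : List Bool), s ≠ [] → s.getD (s.length - 1) false = false →
    ∃ w : List ℤ, EL w = s := by
  intro s
  induction s with
  | nil => intro h; exact absurd rfl h
  | cons b s' IH =>
    intro _ hlast
    rcases eq_or_ne s' [] with h' | h'
    · subst h'
      cases b with
      | false => exact ⟨[eZ 0], by simp [EL, dZ_eZ]⟩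
      | true => simp at hlast
    · have hlast' : s'.getD (s'.length - 1) false = false := by
        have hpos : 0 < s'.length := List.length_pos_iff.mpr h'
        have : (b :: s').length - 1 = (s'.length - 1) + 1 := by simp; omega
        rwa [this, List.getD_cons_succ] at hlast
      obtain ⟨w', hw'⟩ := IH h' hlast'
      cases b with
      | false => exact ⟨eZ 0 :: w', by simp [EL, dZ_eZ] at hw' ⊢; simpa [EL] using hw'⟩
      | true =>
        have hw'ne : w' ≠ [] := by
          rintro rfl; simp [EL] at hw'; exact h' hw'
        obtain ⟨z, w'', rfl⟩ := List.exists_cons_of_ne_nil hw'ne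
        refine ⟨eZ (dZ z + 1) :: w'', ?_⟩
        have h3 : EL (eZ (dZ z + 1) :: w'') =
            List.replicate (dZ z + 1) true ++ [false] ++ EL w'' := by
          simp [EL, dZ_eZ]
        rw [h3, List.replicate_succ]
        have h2 : EL (z :: w'') = List.replicate (dZ z) true ++ [false] ++ EL w'' := by
          simp [EL]
        rw [h2] at hw'
        simp only [List.cons_append, List.append_assoc] at hw' ⊢
        rw [hw']

/-! ### stem of an arbitrary integer -/

lemma sB_length (m : ℤ) (k : ℕ) : (sB m k).length = k := by simp [sB]

lemma sB_getD (m : ℤ) (k : ℕ) {j : ℕ} (hj : j < k) :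
    (sB m k).getD j false = decide (dgm m k j = 1) := by
  rw [sB, List.getD_eq_getElem _ _ (by simpa using hj)]
  simp

lemma two_floor (r : ℝ) : ⌊2*r⌋ - 2*⌊r⌋ = 0 ∨ ⌊2*r⌋ - 2*⌊r⌋ = 1 := by
  have h1 : 2*⌊r⌋ ≤ ⌊2*r⌋ := by
    apply Int.le_floor.2; push_cast
    have := Int.floor_le r; linarith
  have h2 : ⌊2*r⌋ < 2*⌊r⌋ + 2 := by
    apply Int.floor_lt.2; push_cast
    have := Int.lt_floor_add_one r; linarith
  omega

lemma dgm_mem (m : ℤ) {k j : ℕ} (hj : j < k) : dgm m k j = 0 ∨ dgm m k j = 1 := by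
  have heq : (m:ℝ)/2^(k-j-1) = 2*((m:ℝ)/2^(k-j)) := by
    have : (2:ℝ)^(k-j) = 2^(k-j-1)*2 := by
      rw [← pow_succ]; congr 1; omega
    rw [this]; field_simp
  rw [dgm, heq]
  exact two_floor _

lemma bv_sB (m : ℤ) {k j : ℕ} (hj : j < k) :
    bv ((sB m k).getD j false) = dgm m k j := by
  rw [sB_getD m k hj]
  rcases dgm_mem m hj with h | h <;> rw [h] <;> simp [bv]

/-! ### cylinders -/

lemma cyl_open (w : List ℤ) : IsOpen (cyl w) := by
  have heq : cyl w = (↑(Finset.range w.length) : Set ℕ).pi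
      (fun n => {w.getD n 0}) := by
    ext y
    simp [cyl, Set.mem_pi]
  rw [heq]
  exact isOpen_set_pi (Finset.range w.length).finite_toSet
    (fun i _ => isOpen_discrete _)

lemma cyl_nonempty (w : List ℤ) : (fun j => w.getD j 0) ∈ cyl w := fun _ _ => rfl

lemma dodge (t : Set (ℕ → ℤ)) (ht : IsClosed t) (hti : interior t = ∅)
    (w : List ℤ) : ∃ u : List ℤ, cyl (w ++ u) ∩ t = ∅ := by
  have hex : ∃ p ∈ cyl w, p ∉ t := by
    by_contra h
    push_neg at h
    have : cyl w ⊆ interior t := interior_maximal h (cyl_open w)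
    rw [hti] at this
    exact this (cyl_nonempty w)
  obtain ⟨p, hp, hpt⟩ := hex
  obtain ⟨I, U, hU, hsub⟩ := isOpen_pi_iff.mp ht.isOpen_compl p hpt
  set L := max w.length (I.sup id + 1) with hLdef
  have hLw : w.length ≤ L := le_max_left _ _
  have hLI : ∀ i ∈ I, i < L := by
    intro i hi
    have : i ≤ I.sup id := Finset.le_sup (f := id) hi
    omega
  refine ⟨(List.range (L - w.length)).map (fun i => p (w.length + i)), ?_⟩
  set u := (List.range (L - w.length)).map (fun i => p (w.length + i)) with hu
  have hulen : u.length = L - w.length := by simp [hu]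
  have hwulen : (w ++ u).length = L := by simp [hulen]; omega
  rw [Set.eq_empty_iff_forall_notMem]
  rintro y ⟨hyc, hyt⟩
  have hyp : ∀ j, j < L → y j = p j := by
    intro j hj
    have h5 := hyc j (by omega)
    rcases Nat.lt_or_ge j w.length with h | h
    · rw [List.getD_append _ _ _ _ h] at h5
      rw [h5, hp j h]
    · rw [List.getD_append_right _ _ _ _ h, hu,
        List.getD_eq_getElem _ _ (by simp; omega)] at h5
      simp at h5
      rw [h5]
      congr 1
      omega
  have : y ∈ (↑I : Set ℕ).pi U := by
    intro i hi
    rw [hyp i (hLI i hi)]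
    exact (hU i hi).2
  exact hsub this hyt

/-! ### interval selection -/

lemma pick_interval (a b : ℝ) (hab : a < b) :
    ∃ (k : ℕ) (m : ℤ), 1 ≤ k ∧ Even m ∧ a ≤ (m:ℝ)/2^k ∧ ((m:ℝ)+1)/2^k ≤ b := by
  obtain ⟨k0, hk0⟩ := pow_unbounded_of_one_lt (4/(b-a)) (by norm_num : (1:ℝ) < 2)
  set k := k0 + 1 with hk
  have hpow : (0:ℝ) < 2^k := by positivity
  have h4 : (4:ℝ) < (b-a) * 2^k := by
    have h1 : (4:ℝ)/(b-a) < 2^k := by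
      calc (4:ℝ)/(b-a) < 2^k0 := hk0
      _ ≤ 2^k := by apply pow_le_pow_right₀ (by norm_num); omega
    calc (4:ℝ) = (4/(b-a)) * (b-a) := by
          rw [div_mul_cancel₀]; linarith
    _ < 2^k * (b-a) := by apply mul_lt_mul_of_pos_right h1 (by linarith)
    _ = (b-a) * 2^k := by ring
  set m0 := ⌊a * 2^k⌋ with hm0
  have hm0a : a * 2^k < (m0:ℝ) + 1 := Int.lt_floor_add_one _
  have hm0b : (m0:ℝ) ≤ a * 2^k := Int.floor_le _
  obtain ⟨m, hmeven, hm1, hm2⟩ : ∃ m : ℤ, Even m ∧ m0 + 1 ≤ m ∧ m ≤ m0 + 2 := by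
    rcases Int.even_or_odd (m0 + 1) with h | h
    · exact ⟨m0 + 1, h, le_refl _, by omega⟩
    · refine ⟨m0 + 2, ?_, by omega, le_refl _⟩
      obtain ⟨l, hl⟩ := h
      exact ⟨l + 1, by omega⟩
  refine ⟨k, m, by omega, hmeven, ?_, ?_⟩
  · rw [le_div_iff₀ hpow]
    have : ((m0:ℝ) + 1) ≤ (m:ℝ) := by exact_mod_cast hm1
    linarith
  · rw [div_le_iff₀ hpow]
    have : (m:ℝ) ≤ (m0:ℝ) + 2 := by exact_mod_cast hm2
    nlinarith [hpow]

lemma dgm_last_even (m : ℤ) (k : ℕ) (hk : 1 ≤ k) (hm : Even m) :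
    dgm m k (k-1) = 0 := by
  obtain ⟨l, hl⟩ := hm
  have e1 : k - (k-1) - 1 = 0 := by omega
  have e2 : k - (k-1) = 1 := by omega
  rw [dgm, e1, e2, pow_zero, pow_one, hl]
  have h1 : ⌊((l:ℝ) + l)/1⌋ = 2*l := by
    rw [div_one, (by push_cast; ring : ((l:ℝ) + l) = ((2*l : ℤ):ℝ)), Int.floor_intCast]
  have h2 : ⌊((l:ℝ) + l)/2⌋ = l := by
    rw [(by push_cast; ring : ((l:ℝ) + l)/2 = ((l : ℤ):ℝ)), Int.floor_intCast]
  push_cast at h1 h2 ⊢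
  rw [h1, h2]
  ring

/-! ### the key interval lemma -/

theorem key (t : Set (ℕ→ℤ)) (ht : IsClosed t) (hti : interior t = ∅)
    {a b : ℝ} (hab : a < b) :
    ∃ a' b' : ℝ, a ≤ a' ∧ b' ≤ b ∧ a' < b' ∧ ∀ x ∈ Ioo a' b', fR x ∉ t := by
  obtain ⟨k, m, hk1, hmeven, ha, hb⟩ := pick_interval a b hab
  have hne : sB m k ≠ [] := by
    intro h
    have := sB_length m k
    rw [h] at this
    simp at this
    omega
  have hlast : (sB m k).getD ((sB m k).length - 1) false = false := by
    rw [sB_length, sB_getD m k (by omega), dgm_last_even m k hk1 hmeven]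
    simp
  obtain ⟨w, hw⟩ := parse (sB m k) hne hlast
  obtain ⟨u, hu⟩ := dodge t ht hti w
  obtain ⟨hv0, hvlt, hvdig⟩ := code_spec (EL u)
  set tl := (EL u).length with htl
  set v := vB (EL u) with hV
  set m2 := m * 2^tl + v with hm2
  set k2 := k + tl with hk2
  obtain ⟨hap1, hap2⟩ := dgm_append m v k tl hv0 hvlt
  have hpk : (0:ℝ) < 2^k := by positivity
  have hpk2 : (0:ℝ) < 2^k2 := by positivity
  have hptl : (0:ℝ) < 2^tl := by positivity
  have hsplit : (2:ℝ)^k2 = 2^k * 2^tl := by rw [hk2, pow_add]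
  have hv0' : (0:ℝ) ≤ (v:ℝ) := by exact_mod_cast hv0
  have hvlt' : (v:ℝ) < 2^tl := by exact_mod_cast hvlt
  refine ⟨(m2:ℝ)/2^k2, ((m2:ℝ)+1)/2^k2, ?_, ?_, ?_, ?_⟩
  · calc a ≤ (m:ℝ)/2^k := ha
    _ ≤ (m2:ℝ)/2^k2 := by
        rw [div_le_div_iff₀ hpk hpk2, hsplit, hm2]
        push_cast
        nlinarith
  · have hstep : ((m2:ℝ)+1)/2^k2 ≤ ((m:ℝ)+1)/2^k := by
      rw [div_le_div_iff₀ hpk2 hpk, hsplit, hm2]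
      push_cast
      nlinarith [mul_le_mul_of_nonneg_right (show (v:ℝ)+1 ≤ 2^tl by exact_mod_cast Int.add_one_le_iff.mpr hvlt) (le_of_lt hpk)]
    exact le_trans hstep hb
  · rw [div_lt_div_iff₀ hpk2 hpk2]
    nlinarith
  · intro x hx
    have hdig : ∀ j, j < k2 → dg x j = dgm m2 k2 j := fun j hj => dg_of_mem_Ioo hx hj
    have hELwu : EL (w ++ u) = sB m k ++ EL u := by rw [EL_append, hw]
    have hlen2 : (EL (w++u)).length = k2 := by
      rw [hELwu, List.length_append, sB_length]
    have hpre : ∀ j, j < (EL (w++u)).length → dg x j = bv ((EL (w++u)).getD j false) := by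
      intro j hj
      rw [hlen2] at hj
      rw [hdig j hj, hELwu]
      rcases Nat.lt_or_ge j k with h | h
      · rw [List.getD_append _ _ _ _ (by rw [sB_length]; exact h), bv_sB m h, hap1 j h]
      · rw [List.getD_append_right _ _ _ _ (by rw [sB_length]; exact h), sB_length,
          hap2 j h hj, hvdig (j-k) (by omega)]
    obtain ⟨_, hdec⟩ := decode_prefix (w++u) (dg x) hpre
    intro hmem
    have hcyl : fR x ∈ cyl (w ++ u) := fun n hn => hdec n hn
    have : fR x ∈ cyl (w++u) ∩ t := ⟨hcyl, hmem⟩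
    rw [hu] at this
    exact this

/-! ### preimages under fR of meagre sets are meagre -/

lemma fR_pre_nwd {t : Set (ℕ→ℤ)} (htnd : IsNowhereDense t) :
    IsNowhereDense (fR ⁻¹' t) := by
  have hsub : fR ⁻¹' t ⊆ fR ⁻¹' (closure t) := fun x hx => subset_closure hx
  rw [IsNowhereDense, Set.eq_empty_iff_forall_notMem]
  intro x hx
  rw [mem_interior_iff_mem_nhds, Metric.mem_nhds_iff] at hx
  obtain ⟨ε, hε, hball⟩ := hx
  rw [Real.ball_eq_Ioo] at hball
  obtain ⟨a', b', ha', hb', hab', hav⟩ :=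
    key (closure t) isClosed_closure htnd (show x - ε < x + ε by linarith)
  have hmid : (a'+b')/2 ∈ Ioo a' b' := ⟨by linarith, by linarith⟩
  have h1 : (a'+b')/2 ∈ closure (fR ⁻¹' t) := hball ⟨by linarith, by linarith⟩
  obtain ⟨y, hy1, hy2⟩ := (mem_closure_iff.mp h1) (Ioo a' b') isOpen_Ioo hmid
  exact hav y hy1 (subset_closure hy2)

lemma fR_pre_meagre {s : Set (ℕ→ℤ)} (hs : IsMeagre s) : IsMeagre (fR ⁻¹' s) := by
  rw [isMeagre_iff_countable_union_isNowhereDense] at hs ⊢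
  obtain ⟨S, hS1, hS2, hS3⟩ := hs
  refine ⟨(fun t => fR ⁻¹' t) '' S, ?_, hS2.image _, ?_⟩
  · rintro _ ⟨t, htS, rfl⟩
    exact fR_pre_nwd (hS1 t htS)
  · intro x hx
    obtain ⟨t, htS, hxt⟩ := hS3 hx
    exact mem_sUnion.2 ⟨fR ⁻¹' t, ⟨t, htS, rfl⟩, hxt⟩

/-! ### homeomorphism helpers -/

lemma meagre_preimage_homeo {X Y : Type*} [TopologicalSpace X] [TopologicalSpace Y]
    (h : X ≃ₜ Y) {s : Set Y} (hs : IsMeagre s) : IsMeagre (h ⁻¹' s) := by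
  rw [isMeagre_iff_countable_union_isNowhereDense] at hs ⊢
  obtain ⟨S, hS1, hS2, hS3⟩ := hs
  refine ⟨(fun t => h ⁻¹' t) '' S, ?_, hS2.image _, ?_⟩
  · rintro _ ⟨t, htS, rfl⟩
    have := hS1 t htS
    rw [IsNowhereDense] at this ⊢
    rw [← h.preimage_closure, ← h.preimage_interior, this, Set.preimage_empty]
  · intro x hx
    obtain ⟨t, htS, hxt⟩ := hS3 hx
    exact mem_sUnion.2 ⟨h ⁻¹' t, ⟨t, htS, rfl⟩, hxt⟩

lemma isMeagre_union {X : Type*} [TopologicalSpace X] {s t : Set X}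
    (hs : IsMeagre s) (ht : IsMeagre t) : IsMeagre (s ∪ t) := by
  rw [IsMeagre, Set.compl_union]
  exact Filter.inter_mem hs ht

def sigmaHomeo (c : ℕ → ℤ) : (ℕ → ℤ) ≃ₜ (ℕ → ℤ) where
  toFun := fun x n => 2 * c n - x n
  invFun := fun x n => 2 * c n - x n
  left_inv := fun x => by funext n; ring
  right_inv := fun x => by funext n; ring
  continuous_toFun := by
    apply continuous_pi
    intro n
    exact (continuous_of_discreteTopology (f := fun z : ℤ => 2 * c n - z)).comp
      (continuous_apply n)
  continuous_invFun := by
    apply continuous_pi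
    intro n
    exact (continuous_of_discreteTopology (f := fun z : ℤ => 2 * c n - z)).comp
      (continuous_apply n)

end CenterpoleAux

/-- `cov(M)`: the least cardinality of a cover of the real line by meager
sets. -/
noncomputable def covMeager : Cardinal :=
  sInf {c : Cardinal | ∃ (ι : Type) (A : ι → Set ℝ),
    Cardinal.mk ι = c ∧ (∀ i, IsMeagre (A i)) ∧ ⋃ i, A i = Set.univ}

/-- Let `C` be a countable dense subset of `ℤ^ω` and `ι` an index type (set of
colors) of cardinality `κ` with `ω ≤ κ < cov(M)`. Then every Borel coloring
`χ : ℤ^ω → ι` admits a color `i`, a point `c ∈ C`, and a nonmeager (hence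
unbounded) set `S` of color `i` with `S = 2c - S`. -/
theorem countable_dense_centerpole_borel (C : Set (ℕ → ℤ)) (hC : C.Countable)
    (hd : Dense C) (ι : Type) (hι₁ : Cardinal.aleph0 ≤ Cardinal.mk ι)
    (hι₂ : Cardinal.mk ι < covMeager) (χ : (ℕ → ℤ) → ι)
    (hχ : ∀ i : ι, MeasurableSet (χ ⁻¹' {i})) :
    ∃ (i : ι) (c : ℕ → ℤ) (S : Set (ℕ → ℤ)), c ∈ C ∧ S ⊆ χ ⁻¹' {i} ∧
      ¬ IsMeagre S ∧ S = (fun x => (fun n => 2 * c n - x n)) '' S := by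
  classical
  open CenterpoleAux in
  -- Step 1: some color class is nonmeager
  have hex : ∃ i, ¬ IsMeagre (χ ⁻¹' {i}) := by
    by_contra h
    push_neg at h
    have hmem : covMeager ≤ Cardinal.mk ι := by
      apply csInf_le'
      refine ⟨ι, fun i => CenterpoleAux.fR ⁻¹' (χ ⁻¹' {i}), rfl,
        fun i => CenterpoleAux.fR_pre_meagre (h i), ?_⟩
      ext x
      simp only [Set.mem_iUnion, Set.mem_univ, iff_true, Set.mem_preimage,
        Set.mem_singleton_iff]
      exact ⟨χ (CenterpoleAux.fR x), rfl⟩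
    exact absurd (lt_of_lt_of_le hι₂ hmem) (lt_irrefl _)
  obtain ⟨i, hi⟩ := hex
  set A := χ ⁻¹' {i} with hA
  have hbm : BaireMeasurableSet A := (hχ i).baireMeasurableSet
  obtain ⟨U, hUopen, hUeq⟩ := hbm.residualEq_isOpen
  have hUne : U.Nonempty := by
    rcases U.eq_empty_or_nonempty with h | h
    · exfalso
      apply hi
      rw [h] at hUeq
      rw [IsMeagre]
      filter_upwards [hUeq] with x hx
      intro hmem
      exact Set.notMem_empty x (cast hx hmem)
    · exact h
  obtain ⟨c, hcC, hcU⟩ := hd.exists_mem_open hUopen hUne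
  set σ := CenterpoleAux.sigmaHomeo c with hσ
  have hUA : IsMeagre (U \ A) := by
    rw [IsMeagre]
    filter_upwards [hUeq] with x hx
    simp only [Set.mem_compl_iff, Set.mem_diff, not_and, not_not]
    intro hxU
    exact cast hx.symm hxU
  set S := A ∩ ⇑σ ⁻¹' A with hS
  have hσc : ⇑σ c = c := by
    funext n
    show 2 * c n - c n = c n
    ring
  refine ⟨i, c, S, hcC, Set.inter_subset_left, ?_, ?_⟩
  · -- S is nonmeager
    intro hSm
    set V := U ∩ ⇑σ ⁻¹' U with hV
    have hVopen : IsOpen V := hUopen.inter (hUopen.preimage σ.continuous)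
    have hVc : c ∈ V := ⟨hcU, by rw [Set.mem_preimage, hσc]; exact hcU⟩
    have hVsub : V ⊆ S ∪ ((U \ A) ∪ ⇑σ ⁻¹' (U \ A)) := by
      rintro x ⟨hxU, hxσU⟩
      by_cases h1 : x ∈ A
      · by_cases h2 : ⇑σ x ∈ A
        · exact Or.inl ⟨h1, h2⟩
        · exact Or.inr (Or.inr ⟨hxσU, h2⟩)
      · exact Or.inr (Or.inl ⟨hxU, h1⟩)
    have hVm : IsMeagre V :=
      (CenterpoleAux.isMeagre_union hSm
        (CenterpoleAux.isMeagre_union hUA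
          (CenterpoleAux.meagre_preimage_homeo σ hUA))).mono hVsub
    have hdense : Dense Vᶜ := dense_of_mem_residual hVm
    obtain ⟨x, hxV, hxVc⟩ := hdense.inter_open_nonempty V hVopen ⟨c, hVc⟩
    exact hxVc hxV
  · -- S = σ '' S
    have hinv : ∀ y : ℕ → ℤ, ⇑σ (⇑σ y) = y := by
      intro y
      funext n
      show 2 * c n - (2 * c n - y n) = y n
      ring
    show S = ⇑σ '' S
    ext y
    constructor
    · intro hy
      refine ⟨⇑σ y, ⟨hy.2, ?_⟩, hinv y⟩
      rw [Set.mem_preimage, hinv y]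
      exact hy.1
    · rintro ⟨x, hx, rfl⟩
      exact ⟨hx.2, by rw [Set.mem_preimage, hinv x]; exact hx.1⟩
end
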